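/- arXiv:2401.01648 — 4 statements merged into one kernel-verified Lean document; each statement's English description precedes it below -/
import Mathlib

section
/- The space ω* = βℕ ∖ ℕ, i.e., the Stone–Čech remainder of the countable discrete space ℕ with the subspace topology inherited from βℕ, is DRC but not DRS_ω. Consequently, DRC does not imply DRS_ω. -/
open Filter Set Topology

/-- The set of accumulation points of a sequence `a : ℕ → X`. -/
def accSeq {X : Type*} [TopologicalSpace X] (a : ℕ → X) : Set X :=
  {x | ∀ U : Set X, IsOpen U → x ∈ U → {n : ℕ | a n ∈ U}.Infinite}

/-- `Y` is relatively countably compact in `X` iff every sequence in `Y`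
has an accumulation point in `X`. -/
def RelCountablyCompactIn {X : Type*} [TopologicalSpace X] (Y : Set X) : Prop :=
  ∀ y : ℕ → X, (∀ n, y n ∈ Y) → (accSeq y).Nonempty

/-- `X` is DRC iff it has a dense, relatively countably compact subset. -/
def IsDRC (X : Type*) [TopologicalSpace X] : Prop :=
  ∃ D : Set X, Dense D ∧ RelCountablyCompactIn D

/-- `X` is DRS_ω iff there is a sequence `⟨D_n : n ∈ ℕ⟩` of dense subsets of `X` such that
every sequence `⟨d_n⟩` with `d_n ∈ D_n` has a subsequence converging to some point of `X`. -/
def IsDRSomega (X : Type*) [TopologicalSpace X] : Prop :=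
  ∃ D : ℕ → Set X, (∀ n, Dense (D n)) ∧
    ∀ d : ℕ → X, (∀ n, d n ∈ D n) →
      ∃ (x : X) (φ : ℕ → ℕ), StrictMono φ ∧ Filter.Tendsto (d ∘ φ) Filter.atTop (nhds x)

/-- `ω* = βℕ ∖ ℕ`, the Stone–Čech remainder of the countable discrete space `ℕ`,
realized as the subspace of nonprincipal ultrafilters of the space `Ultrafilter ℕ`
(which is the Stone–Čech compactification of the discrete space `ℕ`, with `ℕ`
embedded via `pure`). -/
def omegaStar : Type := {u : Ultrafilter ℕ // u ∉ Set.range (pure : ℕ → Ultrafilter ℕ)}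

instance : TopologicalSpace omegaStar :=
  instTopologicalSpaceSubtype

/-- An ultrafilter containing a finite set is principal. -/
lemma omegaStar_aux_mem_range_pure {u : Ultrafilter ℕ} {s : Set ℕ} (hs : s.Finite)
    (hmem : s ∈ u) : u ∈ Set.range (pure : ℕ → Ultrafilter ℕ) := by
  obtain ⟨x, -, hx⟩ := Ultrafilter.eq_pure_of_finite_mem hs hmem
  exact ⟨x, hx.symm⟩

/-- The pairwise disjoint infinite subsets of `ℕ` used as separators. -/
def omegaStarSep (n : ℕ) : Set ℕ := Set.range (Nat.pair n)

lemma omegaStarSep_disjoint {n m : ℕ} (h : n ≠ m) :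
    omegaStarSep n ∩ omegaStarSep m = ∅ := by
  ext k
  simp only [omegaStarSep, Set.mem_inter_iff, Set.mem_range, Set.mem_empty_iff_false,
    iff_false, not_and]
  rintro ⟨a, rfl⟩ ⟨b, hb⟩
  exact h ((Nat.pair_eq_pair.mp hb).1.symm)

/-- A nonprincipal ultrafilter containing `omegaStarSep n`. -/
noncomputable def omegaStarWitness (n : ℕ) : Ultrafilter ℕ :=
  Ultrafilter.map (Nat.pair n) (Filter.hyperfilter ℕ)

lemma omegaStarWitness_mem (n : ℕ) : omegaStarSep n ∈ omegaStarWitness n := by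
  rw [omegaStarWitness, Ultrafilter.mem_map]
  have : (Nat.pair n) ⁻¹' (omegaStarSep n) = Set.univ := by
    ext a; simp [omegaStarSep]
  rw [this]
  exact Filter.univ_mem

lemma omegaStarWitness_nonprincipal (n : ℕ) :
    omegaStarWitness n ∉ Set.range (pure : ℕ → Ultrafilter ℕ) := by
  rintro ⟨k, hk⟩
  have h1 : {k} ∈ omegaStarWitness n := by
    rw [← hk]; exact Filter.singleton_mem_pure
  rw [omegaStarWitness, Ultrafilter.mem_map] at h1
  have hinj : Function.Injective (Nat.pair n) := fun a b hab =>
    (Nat.pair_eq_pair.mp hab).2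
  have hfin : ((Nat.pair n) ⁻¹' {k}).Finite :=
    (Set.finite_singleton k).preimage hinj.injOn
  exact Filter.notMem_hyperfilter_of_finite hfin h1

/-- `ω*` is DRC but not DRS_ω; consequently DRC does not imply DRS_ω. -/
theorem omegaStar_isDRC_not_isDRSomega : IsDRC omegaStar ∧ ¬ IsDRSomega omegaStar := by
  constructor
  · -- DRC: take `D = univ`; every sequence has an accumulation point, by compactness of βℕ
    refine ⟨Set.univ, dense_univ, fun y _ => ?_⟩
    set F : Ultrafilter (Ultrafilter ℕ) :=
      Ultrafilter.map (fun n => (y n).1) (Filter.hyperfilter ℕ) with hF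
    obtain ⟨w, -, hw⟩ := isCompact_univ.ultrafilter_le_nhds F
      (by simp [Filter.le_principal_iff])
    -- w is nonprincipal
    have hwn : w ∉ Set.range (pure : ℕ → Ultrafilter ℕ) := by
      rintro ⟨k, rfl⟩
      have hopen : IsOpen {u : Ultrafilter ℕ | ({k} : Set ℕ) ∈ u} :=
        ultrafilter_isOpen_basic {k}
      have hmem : {u : Ultrafilter ℕ | ({k} : Set ℕ) ∈ u} ∈ 𝓝 (pure k : Ultrafilter ℕ) :=
        hopen.mem_nhds (by simp)
      have h2 : {n : ℕ | ({k} : Set ℕ) ∈ (y n).1} ∈ Filter.hyperfilter ℕ := by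
        have := hw hmem
        rwa [hF, Ultrafilter.mem_coe, Ultrafilter.mem_map] at this
      have h3 : {n : ℕ | ({k} : Set ℕ) ∈ (y n).1} = ∅ := by
        ext n
        simp only [Set.mem_setOf_eq, Set.mem_empty_iff_false, iff_false]
        intro hmem'
        exact (y n).2 (omegaStar_aux_mem_range_pure (Set.finite_singleton k) hmem')
      rw [h3] at h2
      exact (Filter.empty_notMem _) h2
    refine ⟨⟨w, hwn⟩, fun U hU hx => ?_⟩
    -- U open in the subspace: obtain a neighborhood in βℕ
    have hUnhds : U ∈ 𝓝 (⟨w, hwn⟩ : omegaStar) := hU.mem_nhds hx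
    rw [nhds_induced Subtype.val] at hUnhds; replace hUnhds := Filter.mem_comap.mp hUnhds
    obtain ⟨V, hV, hVU⟩ := hUnhds
    have h2 : {n : ℕ | (y n).1 ∈ V} ∈ Filter.hyperfilter ℕ := by
      have := hw hV
      rwa [hF, Ultrafilter.mem_coe, Ultrafilter.mem_map] at this
    have hinf : {n : ℕ | (y n).1 ∈ V}.Infinite := by
      intro hfin
      exact Filter.notMem_hyperfilter_of_finite hfin h2
    exact hinf.mono fun n hn => hVU hn
  · -- not DRS_ω
    rintro ⟨D, hD, hconv⟩
    -- pick d n ∈ D n with omegaStarSep n ∈ d n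
    have hpick : ∀ n, ∃ z : omegaStar, z ∈ D n ∧ omegaStarSep n ∈ z.1 := by
      intro n
      have hopen : IsOpen (Subtype.val ⁻¹' {u : Ultrafilter ℕ | omegaStarSep n ∈ u} :
          Set omegaStar) :=
        (ultrafilter_isOpen_basic _).preimage continuous_subtype_val
      have hne : (Subtype.val ⁻¹' {u : Ultrafilter ℕ | omegaStarSep n ∈ u} :
          Set omegaStar).Nonempty :=
        ⟨⟨omegaStarWitness n, omegaStarWitness_nonprincipal n⟩, omegaStarWitness_mem n⟩
      obtain ⟨z, hz1, hz2⟩ := (hD n).exists_mem_open hopen hne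
      exact ⟨z, hz1, hz2⟩
    choose d hd1 hd2 using hpick
    obtain ⟨x, φ, hφ, hlim⟩ := hconv d hd1
    set u : Ultrafilter ℕ := x.1 with hu
    have hlim' : Filter.Tendsto (fun k => (d (φ k)).1) Filter.atTop (𝓝 u) :=
      (continuous_subtype_val.tendsto x).comp hlim
    -- the key closed-set argument
    have key : ∀ g : ℕ → ℕ, Filter.Tendsto g Filter.atTop Filter.atTop →
        (⋃ k, omegaStarSep (φ (g k))) ∈ u := by
      intro g hg
      have hclosed : IsClosed {w : Ultrafilter ℕ | (⋃ k, omegaStarSep (φ (g k))) ∈ w} :=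
        ultrafilter_isClosed_basic _
      have htend : Filter.Tendsto (fun k => (d (φ (g k))).1) Filter.atTop (𝓝 u) :=
        hlim'.comp hg
      have hmem : ∀ k, (d (φ (g k))).1 ∈
          {w : Ultrafilter ℕ | (⋃ k, omegaStarSep (φ (g k))) ∈ w} := by
        intro k
        exact Filter.mem_of_superset (hd2 (φ (g k)))
          (Set.subset_iUnion (fun j => omegaStarSep (φ (g j))) k)
      exact hclosed.mem_of_tendsto htend (Filter.Eventually.of_forall hmem)
    have hE : (⋃ k, omegaStarSep (φ (2 * k))) ∈ u :=
      key (fun k => 2 * k) (Filter.tendsto_atTop_mono (fun k => by simp only [id_eq]; omega) Filter.tendsto_id)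
    have hO : (⋃ k, omegaStarSep (φ (2 * k + 1))) ∈ u :=
      key (fun k => 2 * k + 1) (Filter.tendsto_atTop_mono (fun k => by simp only [id_eq]; omega) Filter.tendsto_id)
    have hdisj : (⋃ k, omegaStarSep (φ (2 * k))) ∩ (⋃ k, omegaStarSep (φ (2 * k + 1))) = ∅ := by
      ext m
      simp only [Set.mem_inter_iff, Set.mem_iUnion, Set.mem_empty_iff_false, iff_false, not_and]
      rintro ⟨i, hi⟩ ⟨j, hj⟩
      have hne : φ (2 * i) ≠ φ (2 * j + 1) := fun h => by
        have := hφ.injective h; omega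
      have := omegaStarSep_disjoint hne
      have : m ∈ (∅ : Set ℕ) := this ▸ Set.mem_inter hi hj
      exact this
    have : (∅ : Set ℕ) ∈ u := by
      rw [← hdisj]; exact Filter.inter_mem hE hO
    exact (Filter.empty_notMem _) this
end

section
/- Fix K, L, M, the partitions {K_n}, {L_n}, and the families 𝒦, ℒ, ℳ. Let β < ω₁ be a limit ordinal and let ⟨𝔸^α : α < β⟩ be a ⪯-increasing sequence of approximations, and let ⟨X^β, ℬ^β⟩ = lim ⟨desc(𝔸^α) : α < β⟩ with generated topology τ_β. Then: (1) for every α < β and every y ∈ γ^α, if F^α_y ∈ 𝒦 then F^α_y converges to y in τ_β, and if F^α_y ∈ ℒ ∪ ℳ then y ∈ acc_{τ_β}(F^α_y); (2) there exists a countable approximation 𝔸^β whose description is ⟨X^β, ℬ^β⟩ such that 𝔸^α ⪯ 𝔸^β for every α < β. -/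
/-- `U` is open in the topology on the set `Xc` generated by the base
`⟨B i : i < ν⟩`: `U ⊆ Xc` and every point of `U` lies in a basic set contained in `U`. -/
def IsOpenIn {α : Type*} (Xc : Set α) (ν : Ordinal) (B : Ordinal → Set α) (U : Set α) : Prop :=
  U ⊆ Xc ∧ ∀ x ∈ U, ∃ i < ν, x ∈ B i ∧ B i ⊆ U

/-- `⟨Xc, ⟨B i : i < ν⟩⟩` is a *description*: the ordinal-indexed family
`⟨B i : i < ν⟩` consists of subsets of `Xc` and forms a base of clopen sets for a
zero-dimensional Hausdorff topology on `Xc`. -/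
def IsDescription {α : Type*} (Xc : Set α) (ν : Ordinal) (B : Ordinal → Set α) : Prop :=
  (∀ i < ν, B i ⊆ Xc) ∧
  (⋃ i ∈ Set.Iio ν, B i) = Xc ∧
  (∀ i < ν, ∀ j < ν, ∀ x ∈ B i ∩ B j, ∃ k < ν, x ∈ B k ∧ B k ⊆ B i ∩ B j) ∧
  (∀ i < ν, IsOpenIn Xc ν B (Xc \ B i)) ∧
  (∀ x ∈ Xc, ∀ y ∈ Xc, x ≠ y →
    ∃ i < ν, ∃ j < ν, x ∈ B i ∧ y ∈ B j ∧ B i ∩ B j = ∅)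

/-- The partial order `⪯` on descriptions. -/
def DescLE {α : Type*} (X0 : Set α) (ν0 : Ordinal) (B0 : Ordinal → Set α)
    (X1 : Set α) (ν1 : Ordinal) (B1 : Ordinal → Set α) : Prop :=
  X0 ⊆ X1 ∧ ν0 ≤ ν1 ∧
  (∀ i < ν0, B1 i ∩ X0 = B0 i) ∧
  (∀ i < ν0, ∀ j < ν0, (B0 i ⊆ B0 j ↔ B1 i ⊆ B1 j)) ∧
  (∀ i < ν0, ∀ j < ν0, (B0 i ∩ B0 j = ∅ ↔ B1 i ∩ B1 j = ∅))

/-- The set `A` converges to the point `x` in the topology on `Xc` generated by the base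
`⟨B i : i < ν⟩`: every open set containing `x` contains all but finitely many
elements of `A`. -/
def ConvIn {α : Type*} (Xc : Set α) (ν : Ordinal) (B : Ordinal → Set α)
    (A : Set α) (x : α) : Prop :=
  ∀ U : Set α, IsOpenIn Xc ν B U → x ∈ U → (A \ U).Finite

/-- The set of accumulation points of `A` in the topology on `Xc` generated by the base
`⟨B i : i < ν⟩`: points of `Xc` each of whose open neighbourhoods meets `A` in an
infinite set. -/
def accIn {α : Type*} (Xc : Set α) (ν : Ordinal) (B : Ordinal → Set α)
    (A : Set α) : Set α :=
  {x | x ∈ Xc ∧ ∀ U : Set α, IsOpenIn Xc ν B U → x ∈ U → (A ∩ U).Infinite}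

/-- `A ∈ 𝒦`, i.e. `A ⊆ K` and `A ∩ K_n` is finite for every `n`. -/
def MemKK {α : Type*} (K : Set α) (Kp : ℕ → Set α) (A : Set α) : Prop :=
  A ⊆ K ∧ ∀ n : ℕ, (A ∩ Kp n).Finite

/-- `A ∈ ℒ`, i.e. `A ⊆ L` and `A ∩ L_n` is finite for every `n`. -/
def MemLL {α : Type*} (L : Set α) (Lp : ℕ → Set α) (A : Set α) : Prop :=
  A ⊆ L ∧ ∀ n : ℕ, (A ∩ Lp n).Finite

/-- The fixed data: `K, L, M` are pairwise disjoint countably infinite sets,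
`⟨Kp n⟩` and `⟨Lp n⟩` are partitions of `K` and `L` into infinitely many infinite
pieces, and `emb` is an injective enumeration of the "ordinal part" (representing the
countable ordinals), whose range is disjoint from `K ∪ L ∪ M`. -/
def SetupKLM {α : Type*} (K L M : Set α) (Kp Lp : ℕ → Set α) (emb : Ordinal → α) : Prop :=
  K.Countable ∧ K.Infinite ∧ L.Countable ∧ L.Infinite ∧ M.Countable ∧ M.Infinite ∧
  Disjoint K L ∧ Disjoint K M ∧ Disjoint L M ∧
  (⋃ n, Kp n) = K ∧ Pairwise (Function.onFun Disjoint Kp) ∧ (∀ n, (Kp n).Infinite) ∧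
  (⋃ n, Lp n) = L ∧ Pairwise (Function.onFun Disjoint Lp) ∧ (∀ n, (Lp n).Infinite) ∧
  (∀ a b : Ordinal, a < (Cardinal.aleph 1).ord → b < (Cardinal.aleph 1).ord →
    emb a = emb b → a = b) ∧
  (∀ a : Ordinal, a < (Cardinal.aleph 1).ord → emb a ∉ K ∪ L ∪ M)

/-- The underlying set `X = K ∪ L ∪ M ∪ γ` of an approximation
(the ordinal `γ` being represented by `emb '' (Set.Iio γ)`). -/
def carrierOf {α : Type*} (K L M : Set α) (emb : Ordinal → α) (γ : Ordinal) : Set α :=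
  K ∪ L ∪ M ∪ emb '' Set.Iio γ

/-- `⟨K ∪ L ∪ M ∪ γ, ⟨B i : i < ν⟩, ⟨F y : y < γ⟩⟩` is a *countable approximation*:
`γ, ν < ω₁`; the underlying set is countable and `⟨B i : i < ν⟩` is a description of it;
each `F y` (for `y < γ`) is an infinite member of `𝒦 ∪ ℒ ∪ ℳ` converging to (the point
representing) `y`; and every basic set `B i` meets `M` in an infinite set and meets
`Kp n` and `Lp n` in infinite sets for all but finitely many `n`. -/
def IsApprox {α : Type*} (K L M : Set α) (Kp Lp : ℕ → Set α) (emb : Ordinal → α)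
    (γ ν : Ordinal) (B : Ordinal → Set α) (F : Ordinal → Set α) : Prop :=
  γ < (Cardinal.aleph 1).ord ∧ ν < (Cardinal.aleph 1).ord ∧
  (carrierOf K L M emb γ).Countable ∧
  IsDescription (carrierOf K L M emb γ) ν B ∧
  (∀ y < γ, (F y).Infinite ∧ (MemKK K Kp (F y) ∨ MemLL L Lp (F y) ∨ F y ⊆ M) ∧
    ConvIn (carrierOf K L M emb γ) ν B (F y) (emb y)) ∧
  (∀ i < ν, (B i ∩ M).Infinite ∧
    ∃ N : ℕ, ∀ n ≥ N, (B i ∩ Kp n).Infinite ∧ (B i ∩ Lp n).Infinite)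

/-- The partial order `⪯` on approximations: the descriptions extend each other,
`F¹_y = F⁰_y` whenever `F⁰_y ∈ 𝒦`, and `F¹_y ⊆* F⁰_y` whenever `F⁰_y ∈ ℒ ∪ ℳ`. -/
def ApproxLE {α : Type*} (K L M : Set α) (Kp Lp : ℕ → Set α) (emb : Ordinal → α)
    (γ0 ν0 : Ordinal) (B0 F0 : Ordinal → Set α)
    (γ1 ν1 : Ordinal) (B1 F1 : Ordinal → Set α) : Prop :=
  γ0 ≤ γ1 ∧
  DescLE (carrierOf K L M emb γ0) ν0 B0 (carrierOf K L M emb γ1) ν1 B1 ∧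
  ∀ y < γ0, (MemKK K Kp (F0 y) → F1 y = F0 y) ∧
    ((MemLL L Lp (F0 y) ∨ F0 y ⊆ M) → (F1 y \ F0 y).Finite)

open Set

universe u2 u3 u4

set_option linter.unusedSectionVars false

noncomputable section

/-- The limit carrier set. -/
def limX {α : Type*} (K L M : Set α) (emb : Ordinal.{u2} → α) (β : Ordinal.{u3})
    (γf : Ordinal.{u3} → Ordinal.{u2}) : Set α :=
  ⋃ a' ∈ Set.Iio β, carrierOf K L M emb (γf a')

/-- The limit basic sets. -/
def limB {α : Type*} (β : Ordinal.{u3}) (νf : Ordinal.{u3} → Ordinal.{u4})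
    (Bf : Ordinal.{u3} → Ordinal.{u4} → Set α) : Ordinal.{u4} → Set α :=
  fun i => ⋃ a' ∈ {a' : Ordinal | a' < β ∧ i < νf a'}, Bf a' i

/-- The limit index ordinal. -/
def limν (β : Ordinal.{u3}) (νf : Ordinal.{u3} → Ordinal.{u4}) : Ordinal.{u4} :=
  sSup (νf '' Set.Iio β)

theorem countable_Iio_omega1 {o : Ordinal} (ho : o < (Cardinal.aleph 1).ord) :
    (Set.Iio o).Countable := by
  rw [Cardinal.countable_iff_lt_aleph_one, Ordinal.mk_Iio_ordinal]
  calc Cardinal.lift o.card < Cardinal.lift (Cardinal.aleph 1) :=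
        Cardinal.lift_lt.2 (Cardinal.lt_ord.1 ho)
    _ = Cardinal.aleph 1 := by rw [Cardinal.lift_aleph, Ordinal.lift_one]

theorem sup_lt_omega1 {β : Ordinal.{u3}} (hβpos : 0 < β) (hβ : β < (Cardinal.aleph 1).ord)
    (g : Ordinal.{u3} → Ordinal.{u4}) (hg : ∀ a < β, g a < (Cardinal.aleph 1).ord) :
    sSup (g '' Set.Iio β) < (Cardinal.aleph 1).ord := by
  obtain ⟨f, hf⟩ := (countable_Iio_omega1 hβ).exists_eq_range ⟨0, hβpos⟩
  have himg : g '' Set.Iio β = Set.range (g ∘ f) := by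
    rw [hf, Set.range_comp]
  rw [himg]
  show (⨆ n : ℕ, (g ∘ f) n) < (Cardinal.aleph 1).ord
  refine Cardinal.iSup_lt_ord_lift_of_isRegular Cardinal.isRegular_aleph_one ?_ ?_
  · rw [Cardinal.mk_nat, Cardinal.lift_aleph0]
    exact Cardinal.aleph0_lt_aleph_one
  · intro n
    have : f n ∈ Set.Iio β := by rw [hf]; exact Set.mem_range_self n
    exact hg (f n) this
section LimDev

variable {α : Type*} {K L M : Set α} {Kp Lp : ℕ → Set α} {emb : Ordinal.{u2} → α}
  {β : Ordinal.{u3}} {γf : Ordinal.{u3} → Ordinal.{u2}} {νf : Ordinal.{u3} → Ordinal.{u4}}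
  {Bf : Ordinal.{u3} → Ordinal.{u4} → Set α} {Ff : Ordinal.{u3} → Ordinal.{u2} → Set α}

-- Component extraction abbreviations
variable (hβlim : Order.IsSuccLimit β) (hβ : β < (Cardinal.aleph 1).ord)
  (happrox : ∀ a < β, IsApprox K L M Kp Lp emb (γf a) (νf a) (Bf a) (Ff a))
  (hmono : ∀ a1 a2 : Ordinal, a1 ≤ a2 → a2 < β →
      ApproxLE K L M Kp Lp emb (γf a1) (νf a1) (Bf a1) (Ff a1)
        (γf a2) (νf a2) (Bf a2) (Ff a2))

section
include happrox

theorem lim_desc_of (a : Ordinal) (ha : a < β) :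
    IsDescription (carrierOf K L M emb (γf a)) (νf a) (Bf a) :=
  (happrox a ha).2.2.2.1

theorem lim_B_sub_carrier {a i : Ordinal} (ha : a < β) (hi : i < νf a) :
    Bf a i ⊆ carrierOf K L M emb (γf a) :=
  (lim_desc_of happrox a ha).1 i hi

theorem lim_F_spec {a y : Ordinal} (ha : a < β) (hy : y < γf a) :
    (Ff a y).Infinite ∧ (MemKK K Kp (Ff a y) ∨ MemLL L Lp (Ff a y) ∨ Ff a y ⊆ M) ∧
      ConvIn (carrierOf K L M emb (γf a)) (νf a) (Bf a) (Ff a y) (emb y) :=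
  (happrox a ha).2.2.2.2.1 y hy

end

section
include hmono

theorem lim_nu_mono {a1 a2 : Ordinal} (h : a1 ≤ a2) (h2 : a2 < β) : νf a1 ≤ νf a2 :=
  (hmono a1 a2 h h2).2.1.2.1

theorem lim_gamma_mono {a1 a2 : Ordinal} (h : a1 ≤ a2) (h2 : a2 < β) : γf a1 ≤ γf a2 :=
  (hmono a1 a2 h h2).1

theorem lim_B_cap {a1 a2 i : Ordinal} (h : a1 ≤ a2) (h2 : a2 < β) (hi : i < νf a1) :
    Bf a2 i ∩ carrierOf K L M emb (γf a1) = Bf a1 i :=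
  (hmono a1 a2 h h2).2.1.2.2.1 i hi

theorem lim_B_subset_iff {a1 a2 i j : Ordinal} (h : a1 ≤ a2) (h2 : a2 < β)
    (hi : i < νf a1) (hj : j < νf a1) : Bf a1 i ⊆ Bf a1 j ↔ Bf a2 i ⊆ Bf a2 j :=
  (hmono a1 a2 h h2).2.1.2.2.2.1 i hi j hj

theorem lim_B_disj_iff {a1 a2 i j : Ordinal} (h : a1 ≤ a2) (h2 : a2 < β)
    (hi : i < νf a1) (hj : j < νf a1) : Bf a1 i ∩ Bf a1 j = ∅ ↔ Bf a2 i ∩ Bf a2 j = ∅ :=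
  (hmono a1 a2 h h2).2.1.2.2.2.2 i hi j hj

theorem lim_Bf_mono {a1 a2 i : Ordinal} (h : a1 ≤ a2) (h2 : a2 < β) (hi : i < νf a1) :
    Bf a1 i ⊆ Bf a2 i := by
  rw [← lim_B_cap hmono h h2 hi]
  exact Set.inter_subset_left

end


theorem lim_bddAbove {g : Ordinal.{u3} → Ordinal.{u4}}
    (hg : ∀ a < β, g a < (Cardinal.aleph 1).ord) : BddAbove (g '' Set.Iio β) :=
  ⟨(Cardinal.aleph 1).ord, by rintro x ⟨a, ha, rfl⟩; exact (hg a ha).le⟩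

theorem lim_sup_le {g : Ordinal.{u3} → Ordinal.{u4}}
    (hg : ∀ a < β, g a < (Cardinal.aleph 1).ord) {a : Ordinal} (ha : a < β) :
    g a ≤ sSup (g '' Set.Iio β) :=
  le_csSup (lim_bddAbove hg) (Set.mem_image_of_mem _ ha)

include hβlim in
theorem lim_exists_sup {g : Ordinal.{u3} → Ordinal.{u4}} {i : Ordinal}
    (hi : i < sSup (g '' Set.Iio β)) : ∃ a < β, i < g a := by
  by_contra hcon
  push_neg at hcon
  have : sSup (g '' Set.Iio β) ≤ i := csSup_le (Set.Nonempty.image _ ⟨0, hβlim.pos⟩)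
    (by rintro x ⟨a, ha, rfl⟩; exact hcon a ha)
  exact absurd hi this.not_gt



theorem carrier_mono {γ1 γ2 : Ordinal} (h : γ1 ≤ γ2) :
    carrierOf K L M emb γ1 ⊆ carrierOf K L M emb γ2 :=
  Set.union_subset_union subset_rfl (Set.image_mono (Set.Iio_subset_Iio h))

include happrox in
theorem lim_nu_le {a : Ordinal} (ha : a < β) : νf a ≤ limν β νf :=
  lim_sup_le (fun a' ha' => (happrox a' ha').2.1) ha

theorem lim_mem_limX {x : α} :
    x ∈ limX K L M emb β γf ↔ ∃ a < β, x ∈ carrierOf K L M emb (γf a) := by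
  simp [limX]

theorem lim_Bf_sub_limB {a i : Ordinal} (ha : a < β) (hi : i < νf a) :
    Bf a i ⊆ limB β νf Bf i :=
  Set.subset_biUnion_of_mem (u := fun a' => Bf a' i)
    (show a ∈ {a' : Ordinal | a' < β ∧ i < νf a'} from ⟨ha, hi⟩)

theorem lim_mem_limB {x : α} {i : Ordinal} :
    x ∈ limB β νf Bf i ↔ ∃ a, (a < β ∧ i < νf a) ∧ x ∈ Bf a i := by
  simp [limB, Set.mem_setOf_eq]

include happrox in
theorem lim_limB_sub_limX {i : Ordinal} : limB β νf Bf i ⊆ limX K L M emb β γf := by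
  intro x hx
  obtain ⟨a, ⟨ha, hi⟩, hxa⟩ := lim_mem_limB.1 hx
  exact lim_mem_limX.mpr ⟨a, ha, lim_B_sub_carrier happrox ha hi hxa⟩

include happrox hmono in
theorem lim_limB_cap {a i : Ordinal} (ha : a < β) (hi : i < νf a) :
    limB β νf Bf i ∩ carrierOf K L M emb (γf a) = Bf a i := by
  apply subset_antisymm
  · rintro x ⟨hx1, hx2⟩
    obtain ⟨a', ⟨ha', hi'⟩, hx'⟩ := lim_mem_limB.1 hx1
    have hcβ : max a a' < β := max_lt ha ha'
    have hxc : x ∈ Bf (max a a') i :=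
      lim_Bf_mono hmono (le_max_right a a') hcβ hi' hx'
    rw [← lim_B_cap hmono (le_max_left a a') hcβ hi]
    exact ⟨hxc, hx2⟩
  · exact Set.subset_inter (lim_Bf_sub_limB ha hi) (lim_B_sub_carrier happrox ha hi)

include happrox hmono in
theorem lim_limB_subset {a i j : Ordinal} (ha : a < β) (hi : i < νf a) (hj : j < νf a)
    (hss : Bf a i ⊆ Bf a j) : limB β νf Bf i ⊆ limB β νf Bf j := by
  intro x hx
  obtain ⟨a', ⟨ha', hi'⟩, hx'⟩ := lim_mem_limB.1 hx
  have hcβ : max a a' < β := max_lt ha ha'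
  have hxc : x ∈ Bf (max a a') i :=
    lim_Bf_mono hmono (le_max_right a a') hcβ hi' hx'
  have hssc : Bf (max a a') i ⊆ Bf (max a a') j :=
    (lim_B_subset_iff hmono (le_max_left a a') hcβ hi hj).1 hss
  exact lim_Bf_sub_limB hcβ (hj.trans_le (lim_nu_mono hmono (le_max_left a a') hcβ)) (hssc hxc)

include happrox hmono in
theorem lim_limB_disj {a i j : Ordinal} (ha : a < β) (hi : i < νf a) (hj : j < νf a)
    (hd : Bf a i ∩ Bf a j = ∅) : limB β νf Bf i ∩ limB β νf Bf j = ∅ := by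
  rw [Set.eq_empty_iff_forall_notMem]
  rintro x ⟨hxi, hxj⟩
  obtain ⟨a1, ⟨ha1, hi1⟩, hx1⟩ := lim_mem_limB.1 hxi
  obtain ⟨a2, ⟨ha2, hi2⟩, hx2⟩ := lim_mem_limB.1 hxj
  set c := max a (max a1 a2) with hc
  have hcβ : c < β := max_lt ha (max_lt ha1 ha2)
  have hxc1 : x ∈ Bf c i :=
    lim_Bf_mono hmono ((le_max_left a1 a2).trans (le_max_right _ _)) hcβ hi1 hx1
  have hxc2 : x ∈ Bf c j :=
    lim_Bf_mono hmono ((le_max_right a1 a2).trans (le_max_right _ _)) hcβ hi2 hx2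
  have := (lim_B_disj_iff hmono (le_max_left a _) hcβ hi hj).1 hd
  rw [Set.eq_empty_iff_forall_notMem] at this
  exact this x ⟨hxc1, hxc2⟩

include happrox in
theorem lim_limB_open {i : Ordinal} (hi : i < limν β νf) :
    IsOpenIn (limX K L M emb β γf) (limν β νf) (limB β νf Bf) (limB β νf Bf i) :=
  ⟨lim_limB_sub_limX happrox, fun x hx => ⟨i, hi, hx, subset_rfl⟩⟩

include hβlim happrox hmono in
theorem lim_isDescription :
    IsDescription (limX K L M emb β γf) (limν β νf) (limB β νf Bf) := by
  refine ⟨fun i _ => lim_limB_sub_limX happrox, ?_, ?_, ?_, ?_⟩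
  · apply subset_antisymm
    · exact Set.iUnion₂_subset fun i _ => lim_limB_sub_limX happrox
    · intro x hx
      obtain ⟨a, ha, hxa⟩ := lim_mem_limX.1 hx
      have h2 := (lim_desc_of happrox a ha).2.1
      rw [← h2] at hxa
      obtain ⟨i, hi, hxi⟩ := by simpa using hxa
      simp only [Set.mem_iUnion]
      exact ⟨i, hi.trans_le (lim_nu_le happrox ha), lim_Bf_sub_limB ha hi hxi⟩
  · rintro i hi j hj x ⟨hxi, hxj⟩
    obtain ⟨a1, ⟨ha1, hi1⟩, hx1⟩ := lim_mem_limB.1 hxi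
    obtain ⟨a2, ⟨ha2, hj2⟩, hx2⟩ := lim_mem_limB.1 hxj
    set c := max a1 a2 with hc
    have hcβ : c < β := max_lt ha1 ha2
    have hic : i < νf c := hi1.trans_le (lim_nu_mono hmono (le_max_left _ _) hcβ)
    have hjc : j < νf c := hj2.trans_le (lim_nu_mono hmono (le_max_right _ _) hcβ)
    have hxc1 : x ∈ Bf c i := lim_Bf_mono hmono (le_max_left _ _) hcβ hi1 hx1
    have hxc2 : x ∈ Bf c j := lim_Bf_mono hmono (le_max_right _ _) hcβ hj2 hx2
    obtain ⟨k, hk, hxk, hsub⟩ := (lim_desc_of happrox c hcβ).2.2.1 i hic j hjc x ⟨hxc1, hxc2⟩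
    refine ⟨k, hk.trans_le (lim_nu_le happrox hcβ), lim_Bf_sub_limB hcβ hk hxk, ?_⟩
    exact Set.subset_inter
      (lim_limB_subset happrox hmono hcβ hk hic (hsub.trans Set.inter_subset_left))
      (lim_limB_subset happrox hmono hcβ hk hjc (hsub.trans Set.inter_subset_right))
  · intro i hi
    refine ⟨Set.diff_subset, ?_⟩
    rintro x ⟨hxX, hxi⟩
    obtain ⟨a0, ha0, hxc0⟩ := lim_mem_limX.1 hxX
    obtain ⟨a1, ha1, hi1⟩ := lim_exists_sup hβlim hi
    set c := max a0 a1 with hc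
    have hcβ : c < β := max_lt ha0 ha1
    have hic : i < νf c := hi1.trans_le (lim_nu_mono hmono (le_max_right _ _) hcβ)
    have hxc : x ∈ carrierOf K L M emb (γf c) :=
      carrier_mono (lim_gamma_mono hmono (le_max_left _ _) hcβ) hxc0
    have hxnB : x ∉ Bf c i := fun h => hxi (lim_Bf_sub_limB hcβ hic h)
    obtain ⟨k, hk, hxk, hsub⟩ :=
      ((lim_desc_of happrox c hcβ).2.2.2.1 i hic).2 x ⟨hxc, hxnB⟩
    have hdisj : Bf c k ∩ Bf c i = ∅ := by
      rw [Set.eq_empty_iff_forall_notMem]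
      rintro u ⟨hu1, hu2⟩
      exact (hsub hu1).2 hu2
    have hld := lim_limB_disj happrox hmono hcβ hk hic hdisj
    rw [Set.eq_empty_iff_forall_notMem] at hld
    refine ⟨k, hk.trans_le (lim_nu_le happrox hcβ), lim_Bf_sub_limB hcβ hk hxk, ?_⟩
    intro u hu
    exact ⟨lim_limB_sub_limX happrox hu, fun hui => hld u ⟨hu, hui⟩⟩
  · intro x hx y hy hxy
    obtain ⟨a1, ha1, hx1⟩ := lim_mem_limX.1 hx
    obtain ⟨a2, ha2, hy2⟩ := lim_mem_limX.1 hy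
    set c := max a1 a2 with hc
    have hcβ : c < β := max_lt ha1 ha2
    have hxc : x ∈ carrierOf K L M emb (γf c) :=
      carrier_mono (lim_gamma_mono hmono (le_max_left _ _) hcβ) hx1
    have hyc : y ∈ carrierOf K L M emb (γf c) :=
      carrier_mono (lim_gamma_mono hmono (le_max_right _ _) hcβ) hy2
    obtain ⟨i, hi, j, hj, hxi, hyj, hd⟩ :=
      (lim_desc_of happrox c hcβ).2.2.2.2 x hxc y hyc hxy
    exact ⟨i, hi.trans_le (lim_nu_le happrox hcβ), j, hj.trans_le (lim_nu_le happrox hcβ),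
      lim_Bf_sub_limB hcβ hi hxi, lim_Bf_sub_limB hcβ hj hyj,
      lim_limB_disj happrox hmono hcβ hi hj hd⟩
-- basic sets of an approximation are open in it
include happrox in
theorem lim_Bf_open {a i : Ordinal} (ha : a < β) (hi : i < νf a) :
    IsOpenIn (carrierOf K L M emb (γf a)) (νf a) (Bf a) (Bf a i) :=
  ⟨lim_B_sub_carrier happrox ha hi, fun x hx => ⟨i, hi, hx, subset_rfl⟩⟩

include happrox hmono in
theorem lim_FK_eq {a1 a2 y : Ordinal} (h : a1 ≤ a2) (h2 : a2 < β) (hy : y < γf a1)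
    (hK : MemKK K Kp (Ff a1 y)) : Ff a2 y = Ff a1 y :=
  ((hmono a1 a2 h h2).2.2 y hy).1 hK

include happrox hmono in
theorem lim_FLM_diff {a1 a2 y : Ordinal} (h : a1 ≤ a2) (h2 : a2 < β) (hy : y < γf a1)
    (hLM : MemLL L Lp (Ff a1 y) ∨ Ff a1 y ⊆ M) : (Ff a2 y \ Ff a1 y).Finite :=
  ((hmono a1 a2 h h2).2.2 y hy).2 hLM

-- Part (1), first clause: K-type sets converge in the limit topology.
include happrox hmono in
theorem lim_conv_K {a y : Ordinal} (ha : a < β) (hy : y < γf a) (hK : MemKK K Kp (Ff a y)) :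
    ConvIn (limX K L M emb β γf) (limν β νf) (limB β νf Bf) (Ff a y) (emb y) := by
  intro U hU hyU
  obtain ⟨i, hi, hyi, hiU⟩ := hU.2 (emb y) hyU
  obtain ⟨a'', ⟨ha'', hi''⟩, hy''⟩ := lim_mem_limB.1 hyi
  set c := max a a'' with hc
  have hcβ : c < β := max_lt ha ha''
  have hic : i < νf c := hi''.trans_le (lim_nu_mono hmono (le_max_right _ _) hcβ)
  have hyc : y < γf c := hy.trans_le (lim_gamma_mono hmono (le_max_left _ _) hcβ)
  have hyBc : emb y ∈ Bf c i := lim_Bf_mono hmono (le_max_right _ _) hcβ hi'' hy''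
  have hFeq : Ff c y = Ff a y := lim_FK_eq happrox hmono (le_max_left _ _) hcβ hy hK
  have hconv := (lim_F_spec happrox hcβ hyc).2.2 (Bf c i) (lim_Bf_open happrox hcβ hic) hyBc
  rw [hFeq] at hconv
  refine hconv.subset ?_
  rintro x ⟨hx1, hx2⟩
  exact ⟨hx1, fun hB => hx2 (hiU (lim_Bf_sub_limB hcβ hic hB))⟩

-- Part (1), second clause: L/M-type sets accumulate at their point.
include hβlim happrox hmono in
theorem lim_acc_LM {a y : Ordinal} (ha : a < β) (hy : y < γf a)
    (hLM : MemLL L Lp (Ff a y) ∨ Ff a y ⊆ M) :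
    emb y ∈ accIn (limX K L M emb β γf) (limν β νf) (limB β νf Bf) (Ff a y) := by
  have hyX : emb y ∈ limX K L M emb β γf :=
    lim_mem_limX.mpr ⟨a, ha, Or.inr ⟨y, hy, rfl⟩⟩
  refine ⟨hyX, ?_⟩
  intro U hU hyU
  obtain ⟨i, hi, hyi, hiU⟩ := hU.2 (emb y) hyU
  obtain ⟨a'', ⟨ha'', hi''⟩, hy''⟩ := lim_mem_limB.1 hyi
  set c := max a a'' with hc
  have hcβ : c < β := max_lt ha ha''
  have hic : i < νf c := hi''.trans_le (lim_nu_mono hmono (le_max_right _ _) hcβ)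
  have hyc : y < γf c := hy.trans_le (lim_gamma_mono hmono (le_max_left _ _) hcβ)
  have hyBc : emb y ∈ Bf c i := lim_Bf_mono hmono (le_max_right _ _) hcβ hi'' hy''
  have hdiff : (Ff c y \ Ff a y).Finite :=
    lim_FLM_diff happrox hmono (le_max_left _ _) hcβ hy hLM
  have hFcinf : (Ff c y).Infinite := (lim_F_spec happrox hcβ hyc).1
  have hconv := (lim_F_spec happrox hcβ hyc).2.2 (Bf c i) (lim_Bf_open happrox hcβ hic) hyBc
  have hint : (Ff c y ∩ Bf c i).Infinite := by
    have := (hFcinf.diff hconv)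
    refine this.mono ?_
    rintro x ⟨hx1, hx2⟩
    simp only [Set.mem_diff] at hx2
    exact ⟨hx1, by_contra fun hB => hx2 ⟨hx1, hB⟩⟩
  have : ((Ff c y ∩ Bf c i) \ (Ff c y \ Ff a y)).Infinite := hint.diff hdiff
  refine this.mono ?_
  rintro x ⟨⟨hx1, hx2⟩, hx3⟩
  simp only [Set.mem_diff] at hx3
  have hxa : x ∈ Ff a y := by_contra fun h => hx3 ⟨hx1, h⟩
  exact ⟨hxa, hiU (lim_Bf_sub_limB hcβ hic hx2)⟩

-- DescLE from each approximation into the limit description.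
include happrox hmono in
theorem lim_descLE {a : Ordinal} (ha : a < β) :
    DescLE (carrierOf K L M emb (γf a)) (νf a) (Bf a)
      (limX K L M emb β γf) (limν β νf) (limB β νf Bf) := by
  refine ⟨fun x hx => lim_mem_limX.mpr ⟨a, ha, hx⟩, lim_nu_le happrox ha,
    fun i hi => lim_limB_cap happrox hmono ha hi, ?_, ?_⟩
  · intro i hi j hj
    constructor
    · exact fun h => lim_limB_subset happrox hmono ha hi hj h
    · intro h
      rw [← lim_limB_cap happrox hmono ha hi, ← lim_limB_cap happrox hmono ha hj]
      exact Set.inter_subset_inter_left _ h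
  · intro i hi j hj
    constructor
    · exact fun h => lim_limB_disj happrox hmono ha hi hj h
    · intro h
      rw [← lim_limB_cap happrox hmono ha hi, ← lim_limB_cap happrox hmono ha hj,
        Set.eq_empty_iff_forall_notMem]
      rw [Set.eq_empty_iff_forall_notMem] at h
      rintro x ⟨⟨h1, _⟩, ⟨h2, _⟩⟩
      exact h x ⟨h1, h2⟩

-- The limit carrier is a carrier.
include hβlim happrox hmono in
theorem lim_carrier_eq :
    carrierOf K L M emb (sSup (γf '' Set.Iio β)) = limX K L M emb β γf := by
  have hgbd : ∀ a < β, γf a < (Cardinal.aleph 1).ord := fun a ha => (happrox a ha).1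
  apply subset_antisymm
  · rintro x (hx | ⟨o, ho, rfl⟩)
    · exact lim_mem_limX.mpr ⟨0, hβlim.pos, Or.inl hx⟩
    · obtain ⟨a, ha, hoa⟩ := lim_exists_sup hβlim ho
      exact lim_mem_limX.mpr ⟨a, ha, Or.inr ⟨o, hoa, rfl⟩⟩
  · intro x hx
    obtain ⟨a, ha, hxa⟩ := lim_mem_limX.1 hx
    rcases hxa with hx | ⟨o, ho, rfl⟩
    · exact Or.inl hx
    · exact Or.inr ⟨o, ho.trans_le (lim_sup_le hgbd ha), rfl⟩
theorem typeKK_not_LM (hKL : Disjoint K L) (hKM : Disjoint K M) {A : Set α}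
    (hinf : A.Infinite) (hK : MemKK K Kp A) (hLM : MemLL L Lp A ∨ A ⊆ M) : False := by
  obtain ⟨x, hx⟩ := hinf.nonempty
  rcases hLM with h | h
  · exact Set.disjoint_left.1 hKL (hK.1 hx) (h.1 hx)
  · exact Set.disjoint_left.1 hKM (hK.1 hx) (h hx)

include happrox hmono in
theorem lim_typeK_const (hKL : Disjoint K L) (hKM : Disjoint K M)
    {a1 a2 y : Ordinal} (ha1 : a1 < β) (ha2 : a2 < β) (hy1 : y < γf a1) (hy2 : y < γf a2)
    (hK : MemKK K Kp (Ff a1 y)) : MemKK K Kp (Ff a2 y) := by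
  set c := max a1 a2 with hc
  have hcβ : c < β := max_lt ha1 ha2
  have hFc : Ff c y = Ff a1 y := lim_FK_eq happrox hmono (le_max_left _ _) hcβ hy1 hK
  rcases (lim_F_spec happrox ha2 hy2).2.1 with hK2 | hLM2
  · exact hK2
  · exfalso
    have hdiff : (Ff c y \ Ff a2 y).Finite :=
      lim_FLM_diff happrox hmono (le_max_right _ _) hcβ hy2 hLM2
    have hsub : Ff c y ⊆ Ff c y \ Ff a2 y := by
      intro x hx
      refine ⟨hx, fun hx2 => ?_⟩
      have hxK : x ∈ K := hK.1 (hFc ▸ hx)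
      rcases hLM2 with h | h
      · exact Set.disjoint_left.1 hKL hxK (h.1 hx2)
      · exact Set.disjoint_left.1 hKM hxK (h hx2)
    have hinf : (Ff c y).Infinite := hFc ▸ (lim_F_spec happrox ha1 hy1).1
    exact hinf (hdiff.subset hsub)

include happrox hmono in
theorem lim_typeLM_const (hKL : Disjoint K L) (hKM : Disjoint K M)
    {a1 a2 y : Ordinal} (ha1 : a1 < β) (ha2 : a2 < β) (hy1 : y < γf a1) (hy2 : y < γf a2)
    (hLM : MemLL L Lp (Ff a1 y) ∨ Ff a1 y ⊆ M) :
    MemLL L Lp (Ff a2 y) ∨ Ff a2 y ⊆ M := by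
  rcases (lim_F_spec happrox ha2 hy2).2.1 with hK2 | hLM2
  · exact absurd hLM (fun h => typeKK_not_LM hKL hKM (lim_F_spec happrox ha1 hy1).1
      (lim_typeK_const happrox hmono hKL hKM ha2 ha1 hy2 hy1 hK2) h)
  · exact hLM2

include hβlim hβ in
theorem lim_cofinal_seq {a : Ordinal.{u3}} (ha : a < β) :
    ∃ b : ℕ → Ordinal.{u3}, Monotone b ∧ (∀ n, b n < β) ∧ (∀ n, a ≤ b n) ∧
      ∀ a' < β, ∃ n, a' ≤ b n := by
  obtain ⟨f, hf⟩ := (countable_Iio_omega1 hβ).exists_eq_range ⟨0, hβlim.pos⟩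
  have hfβ : ∀ n, f n < β := fun n => by
    have : f n ∈ Set.Iio β := by rw [hf]; exact Set.mem_range_self n
    exact this
  refine ⟨fun n => Nat.rec (max a (f 0)) (fun n bn => max bn (f (n + 1))) n, ?_, ?_, ?_, ?_⟩
  · apply monotone_nat_of_le_succ
    intro n
    exact le_max_left _ _
  · intro n
    induction n with
    | zero => exact max_lt ha (hfβ 0)
    | succ n ih => exact max_lt ih (hfβ (n + 1))
  · intro n
    induction n with
    | zero => exact le_max_left _ _
    | succ n ih => exact ih.trans (le_max_left _ _)
  · intro a' ha'
    have : a' ∈ Set.range f := by rw [← hf]; exact ha'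
    obtain ⟨n, rfl⟩ := this
    cases n with
    | zero => exact ⟨0, le_max_right _ _⟩
    | succ n => exact ⟨n + 1, le_max_right _ _⟩
include hβlim hβ happrox in
theorem lim_nu_lt : limν β νf < (Cardinal.aleph 1).ord :=
  sup_lt_omega1 hβlim.pos hβ νf (fun a' ha' => (happrox a' ha').2.1)

include hβlim hβ happrox hmono in
theorem lim_exists_Fy (hKL : Disjoint K L) (hKM : Disjoint K M)
    (hLc : L.Countable) (hMc : M.Countable)
    {a y : Ordinal} (ha : a < β) (hy : y < γf a) :
    ∃ G : Set α, G.Infinite ∧ (MemKK K Kp G ∨ MemLL L Lp G ∨ G ⊆ M) ∧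
      ConvIn (limX K L M emb β γf) (limν β νf) (limB β νf Bf) G (emb y) ∧
      ∀ a' < β, y < γf a' →
        (MemKK K Kp (Ff a' y) → G = Ff a' y) ∧
        ((MemLL L Lp (Ff a' y) ∨ Ff a' y ⊆ M) → (G \ Ff a' y).Finite) := by
  rcases (lim_F_spec happrox ha hy).2.1 with hK | hLM
  · -- K-type: take G = Ff a y itself
    refine ⟨Ff a y, (lim_F_spec happrox ha hy).1, Or.inl hK,
      lim_conv_K happrox hmono ha hy hK, ?_⟩
    intro a' ha' hy'
    constructor
    · intro hK'
      have h1 : Ff (max a a') y = Ff a y :=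
        lim_FK_eq happrox hmono (le_max_left _ _) (max_lt ha ha') hy hK
      have h2 : Ff (max a a') y = Ff a' y :=
        lim_FK_eq happrox hmono (le_max_right _ _) (max_lt ha ha') hy' hK'
      rw [← h1, h2]
    · intro hLM'
      exact absurd hLM' (fun h => typeKK_not_LM hKL hKM (lim_F_spec happrox ha' hy').1
        (lim_typeK_const happrox hmono hKL hKM ha ha' hy hy' hK) h)
  · -- L/M-type: diagonalize
    obtain ⟨b, hbmono, hbβ, hab, hbcof⟩ := lim_cofinal_seq hβlim hβ ha
    have hyb : ∀ n, y < γf (b n) :=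
      fun n => hy.trans_le (lim_gamma_mono hmono (hab n) (hbβ n))
    have hLMb : ∀ n, MemLL L Lp (Ff (b n) y) ∨ Ff (b n) y ⊆ M :=
      fun n => lim_typeLM_const happrox hmono hKL hKM ha (hbβ n) hy (hyb n) hLM
    have hFbsub : ∀ n, Ff (b n) y ⊆ L ∪ M := by
      intro n x hx
      rcases hLMb n with h | h
      · exact Or.inl (h.1 hx)
      · exact Or.inr (h hx)
    -- enumerate the basic neighbourhoods of `emb y`
    have hνlt : limν β νf < (Cardinal.aleph 1).ord := lim_nu_lt hβlim hβ happrox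
    have hyX : emb y ∈ limX K L M emb β γf :=
      lim_mem_limX.mpr ⟨a, ha, Or.inr ⟨y, hy, rfl⟩⟩
    have hSne : (({i | i < limν β νf ∧ emb y ∈ limB β νf Bf i}) : Set Ordinal).Nonempty := by
      have h2 := (lim_isDescription hβlim happrox hmono).2.1
      rw [← h2] at hyX
      obtain ⟨i, hi, hyi⟩ := by simpa using hyX
      exact ⟨i, hi, hyi⟩
    have hScnt : ({i | i < limν β νf ∧ emb y ∈ limB β νf Bf i} : Set Ordinal).Countable :=
      (countable_Iio_omega1 hνlt).mono (fun i hi => hi.1)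
    obtain ⟨h, hS⟩ := hScnt.exists_eq_range hSne
    have hh : ∀ n, h n < limν β νf ∧ emb y ∈ limB β νf Bf (h n) := by
      intro n
      have : h n ∈ {i | i < limν β νf ∧ emb y ∈ limB β νf Bf i} := by
        rw [hS]; exact Set.mem_range_self n
      exact this
    -- nested basic neighbourhoods
    have hjex : ∀ n : ℕ, ∃ j, j < limν β νf ∧ emb y ∈ limB β νf Bf j ∧
        ∀ k ≤ n, limB β νf Bf j ⊆ limB β νf Bf (h k) := by
      intro n
      induction n with
      | zero =>
        exact ⟨h 0, (hh 0).1, (hh 0).2, fun k hk => by rw [Nat.le_zero.1 hk]⟩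
      | succ n ih =>
        obtain ⟨j, hj1, hj2, hj3⟩ := ih
        obtain ⟨j', hj'1, hj'2, hsub⟩ := (lim_isDescription hβlim happrox hmono).2.2.1
          j hj1 (h (n + 1)) (hh (n + 1)).1 (emb y) ⟨hj2, (hh (n + 1)).2⟩
        refine ⟨j', hj'1, hj'2, fun k hk => ?_⟩
        rcases Nat.le_succ_iff_eq_or_le.1 hk with rfl | hk'
        · exact hsub.trans Set.inter_subset_right
        · exact (hsub.trans Set.inter_subset_left).trans (hj3 k hk')
    choose j hjν hjmem hjsub using hjex
    -- the finite "bad" sets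
    have hEfin : ∀ n : ℕ, (⋃ m ∈ Set.Iic n, (Ff (b n) y \ Ff (b m) y)).Finite :=
      fun n => (Set.finite_Iic n).biUnion
        (fun m hm => lim_FLM_diff happrox hmono (hbmono hm) (hbβ n) (hyb m) (hLMb m))
    -- the infinite sets to pick from
    have hT : ∀ n : ℕ, ((Ff (b n) y ∩ limB β νf Bf (j n)) \
        (⋃ m ∈ Set.Iic n, (Ff (b n) y \ Ff (b m) y))).Infinite := by
      intro n
      refine Set.Infinite.diff ?_ (hEfin n)
      exact (lim_acc_LM hβlim happrox hmono (hbβ n) (hyb n) (hLMb n)).2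
        (limB β νf Bf (j n)) (lim_limB_open happrox (hjν n)) (hjmem n)
    -- enumerate the countable ambient set L ∪ M
    have hDne : (L ∪ M : Set α).Nonempty := by
      obtain ⟨u, hu⟩ := (lim_F_spec happrox (hbβ 0) (hyb 0)).1.nonempty
      exact ⟨u, hFbsub 0 hu⟩
    obtain ⟨e, he⟩ := (hLc.union hMc).exists_eq_range hDne
    -- pick the points
    have hpick : ∀ n : ℕ, ∃ u, (u ∈ (Ff (b n) y ∩ limB β νf Bf (j n)) \
        (⋃ m ∈ Set.Iic n, (Ff (b n) y \ Ff (b m) y))) ∧ u ∉ e '' Set.Iic n := by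
      intro n
      obtain ⟨u, hu⟩ := ((hT n).diff ((Set.finite_Iic n).image e)).nonempty
      exact ⟨u, hu.1, hu.2⟩
    choose x hxT hxe using hpick
    have hxF : ∀ n, x n ∈ Ff (b n) y := fun n => (hxT n).1.1
    have hxB : ∀ n, x n ∈ limB β νf Bf (j n) := fun n => (hxT n).1.2
    have hxmem : ∀ n m, m ≤ n → x n ∈ Ff (b m) y := by
      intro n m hm
      by_contra hcon
      exact (hxT n).2 (Set.mem_biUnion hm ⟨hxF n, hcon⟩)
    -- the range of x is infinite
    have hfib : ∀ v : α, {n : ℕ | x n = v}.Finite := by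
      intro v
      rcases Set.eq_empty_or_nonempty {n : ℕ | x n = v} with hemp | ⟨n0, hn0⟩
      · rw [hemp]; exact Set.finite_empty
      · have hvD : v ∈ Set.range e := by
          rw [← he]
          exact hFbsub n0 (hn0 ▸ hxF n0)
        obtain ⟨m, rfl⟩ := hvD
        refine (Set.finite_Iio m).subset ?_
        intro n hn
        by_contra hnm
        exact hxe n ⟨m, Nat.le_of_not_lt hnm, hn.symm⟩
    have hGinf : (Set.range x).Infinite := by
      intro hGfin
      have huniv : (Set.univ : Set ℕ) ⊆ ⋃ v ∈ Set.range x, {n : ℕ | x n = v} :=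
        fun n _ => Set.mem_biUnion (Set.mem_range_self n) rfl
      exact Set.infinite_univ ((hGfin.biUnion (fun v _ => hfib v)).subset huniv)
    have hGsub : Set.range x ⊆ Ff (b 0) y := by
      rintro _ ⟨n, rfl⟩
      exact hxmem n 0 (Nat.zero_le n)
    refine ⟨Set.range x, hGinf, ?_, ?_, ?_⟩
    · rcases hLMb 0 with hL0 | hM0
      · exact Or.inr (Or.inl ⟨hGsub.trans hL0.1, fun n =>
          (hL0.2 n).subset (Set.inter_subset_inter_left _ hGsub)⟩)
      · exact Or.inr (Or.inr (hGsub.trans hM0))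
    · -- convergence
      intro U hU hyU
      obtain ⟨i, hiν, hyi, hiU⟩ := hU.2 (emb y) hyU
      have hiS : i ∈ Set.range h := by
        rw [← hS]; exact ⟨hiν, hyi⟩
      obtain ⟨k, rfl⟩ := hiS
      refine ((Set.finite_Iio k).image x).subset ?_
      rintro _ ⟨⟨n, rfl⟩, hnU⟩
      refine ⟨n, ?_, rfl⟩
      by_contra hnk
      exact hnU (hiU (hjsub n k (Nat.le_of_not_lt hnk) (hxB n)))
    · -- compatibility with the earlier approximations
      intro a' ha' hy'
      have hLM' : MemLL L Lp (Ff a' y) ∨ Ff a' y ⊆ M :=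
        lim_typeLM_const happrox hmono hKL hKM ha ha' hy hy' hLM
      constructor
      · intro hK'
        exact absurd hLM' (fun hcon => typeKK_not_LM hKL hKM
          (lim_F_spec happrox ha' hy').1 hK' hcon)
      · intro _
        obtain ⟨n, han⟩ := hbcof a' ha'
        have hfin1 : (Ff (b n) y \ Ff a' y).Finite :=
          lim_FLM_diff happrox hmono han (hbβ n) hy' hLM'
        refine (((Set.finite_Iio n).image x).union hfin1).subset ?_
        rintro _ ⟨⟨p, rfl⟩, hpF⟩
        by_cases hp : p < n
        · exact Or.inl ⟨p, hp, rfl⟩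
        · exact Or.inr ⟨hxmem p n (Nat.le_of_not_lt hp), hpF⟩
include hβlim hβ happrox hmono in
theorem lim_main (hsetup : SetupKLM K L M Kp Lp emb) :
    (∀ a < β, ∀ y < γf a,
      (MemKK K Kp (Ff a y) →
        ConvIn (limX K L M emb β γf) (limν β νf) (limB β νf Bf) (Ff a y) (emb y)) ∧
      ((MemLL L Lp (Ff a y) ∨ Ff a y ⊆ M) →
        emb y ∈ accIn (limX K L M emb β γf) (limν β νf) (limB β νf Bf) (Ff a y))) ∧
    (∃ (γb : Ordinal) (Fb : Ordinal → Set α),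
      carrierOf K L M emb γb = limX K L M emb β γf ∧
      IsApprox K L M Kp Lp emb γb (limν β νf) (limB β νf Bf) Fb ∧
      ∀ a < β, ApproxLE K L M Kp Lp emb (γf a) (νf a) (Bf a) (Ff a)
        γb (limν β νf) (limB β νf Bf) Fb) := by
  obtain ⟨hKc, hKinf, hLc, hLinf, hMc, hMinf, hKL, hKM, hLM, -⟩ := hsetup
  have hgbd : ∀ a < β, γf a < (Cardinal.aleph 1).ord := fun a ha => (happrox a ha).1
  set γb : Ordinal := sSup (γf '' Set.Iio β) with hγb
  have hγblt : γb < (Cardinal.aleph 1).ord := sup_lt_omega1 hβlim.pos hβ γf hgbd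
  have hcar : carrierOf K L M emb γb = limX K L M emb β γf :=
    lim_carrier_eq hβlim happrox hmono
  constructor
  · intro a ha y hy
    exact ⟨fun hK => lim_conv_K happrox hmono ha hy hK,
      fun hLMy => lim_acc_LM hβlim happrox hmono ha hy hLMy⟩
  · -- construct Fb
    have hFbex : ∀ y : Ordinal, ∃ G : Set α, y < γb →
        (G.Infinite ∧ (MemKK K Kp G ∨ MemLL L Lp G ∨ G ⊆ M) ∧
          ConvIn (limX K L M emb β γf) (limν β νf) (limB β νf Bf) G (emb y) ∧
          ∀ a' < β, y < γf a' →
            (MemKK K Kp (Ff a' y) → G = Ff a' y) ∧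
            ((MemLL L Lp (Ff a' y) ∨ Ff a' y ⊆ M) → (G \ Ff a' y).Finite)) := by
      intro y
      by_cases hy : y < γb
      · obtain ⟨a, ha, hya⟩ := lim_exists_sup hβlim (hγb ▸ hy)
        obtain ⟨G, hG⟩ := lim_exists_Fy hβlim hβ happrox hmono hKL hKM hLc hMc ha hya
        exact ⟨G, fun _ => hG⟩
      · exact ⟨∅, fun h => absurd h hy⟩
    choose Fb hFb using hFbex
    refine ⟨γb, Fb, hcar, ⟨hγblt, lim_nu_lt hβlim hβ happrox, ?_, ?_, ?_, ?_⟩, ?_⟩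
    · -- countability of the carrier
      exact (((hKc.union hLc).union hMc).union ((countable_Iio_omega1 hγblt).image emb))
    · rw [hcar]
      exact lim_isDescription hβlim happrox hmono
    · -- the F clause
      intro y hy
      obtain ⟨hGinf, hGtype, hGconv, _⟩ := hFb y hy
      exact ⟨hGinf, hGtype, by rw [hcar]; exact hGconv⟩
    · -- the B clause
      intro i hi
      obtain ⟨a, ha, hia⟩ := lim_exists_sup hβlim hi
      obtain ⟨hBM, N, hN⟩ := (happrox a ha).2.2.2.2.2 i hia
      refine ⟨hBM.mono (Set.inter_subset_inter_left M (lim_Bf_sub_limB ha hia)), N,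
        fun n hn => ⟨(hN n hn).1.mono
          (Set.inter_subset_inter_left _ (lim_Bf_sub_limB ha hia)),
          (hN n hn).2.mono (Set.inter_subset_inter_left _ (lim_Bf_sub_limB ha hia))⟩⟩
    · -- the ApproxLE clause
      intro a ha
      refine ⟨lim_sup_le hgbd ha, by rw [hcar]; exact lim_descLE happrox hmono ha, ?_⟩
      intro y hy
      have hyb : y < γb := hy.trans_le (lim_sup_le hgbd ha)
      exact (hFb y hyb).2.2.2 a ha hy

end LimDev

end

/-- Limits of increasing sequences of approximations (Lemma `lm:approx`).
Let `β < ω₁` be a limit ordinal and let `⟨𝔸^a : a < β⟩` be a `⪯`-increasing sequence of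
approximations; let `⟨X^β, ℬ^β⟩ = lim ⟨desc 𝔸^a : a < β⟩`.  Then:
(1) for every `a < β` and `y < γ^a`, if `F^a_y ∈ 𝒦` then `F^a_y` converges to `y` in the
limit topology, and if `F^a_y ∈ ℒ ∪ ℳ` then `y` is an accumulation point of `F^a_y`;
(2) there is a countable approximation `𝔸^β` with description `⟨X^β, ℬ^β⟩` such that
`𝔸^a ⪯ 𝔸^β` for every `a < β`. -/
theorem lim_approx {α : Type*} (K L M : Set α) (Kp Lp : ℕ → Set α) (emb : Ordinal → α)
    (hsetup : SetupKLM K L M Kp Lp emb)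
    (β : Ordinal) (hβlim : Order.IsSuccLimit β) (hβ : β < (Cardinal.aleph 1).ord)
    (γf νf : Ordinal → Ordinal) (Bf Ff : Ordinal → Ordinal → Set α)
    (happrox : ∀ a < β, IsApprox K L M Kp Lp emb (γf a) (νf a) (Bf a) (Ff a))
    (hmono : ∀ a1 a2 : Ordinal, a1 ≤ a2 → a2 < β →
      ApproxLE K L M Kp Lp emb (γf a1) (νf a1) (Bf a1) (Ff a1)
        (γf a2) (νf a2) (Bf a2) (Ff a2)) :
    -- the limit description ⟨X^β, ℬ^β⟩:
    (∀ a < β, ∀ y < γf a,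
      (MemKK K Kp (Ff a y) →
        ConvIn (⋃ a' ∈ Set.Iio β, carrierOf K L M emb (γf a'))
          (sSup (νf '' Set.Iio β))
          (fun i => ⋃ a' ∈ {a' : Ordinal | a' < β ∧ i < νf a'}, Bf a' i)
          (Ff a y) (emb y)) ∧
      ((MemLL L Lp (Ff a y) ∨ Ff a y ⊆ M) →
        emb y ∈ accIn (⋃ a' ∈ Set.Iio β, carrierOf K L M emb (γf a'))
          (sSup (νf '' Set.Iio β))
          (fun i => ⋃ a' ∈ {a' : Ordinal | a' < β ∧ i < νf a'}, Bf a' i)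
          (Ff a y))) ∧
    (∃ (γb : Ordinal) (Fb : Ordinal → Set α),
      carrierOf K L M emb γb = (⋃ a' ∈ Set.Iio β, carrierOf K L M emb (γf a')) ∧
      IsApprox K L M Kp Lp emb γb (sSup (νf '' Set.Iio β))
        (fun i => ⋃ a' ∈ {a' : Ordinal | a' < β ∧ i < νf a'}, Bf a' i) Fb ∧
      ∀ a < β, ApproxLE K L M Kp Lp emb (γf a) (νf a) (Bf a) (Ff a)
        γb (sSup (νf '' Set.Iio β))
        (fun i => ⋃ a' ∈ {a' : Ordinal | a' < β ∧ i < νf a'}, Bf a' i) Fb) := by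
  exact lim_main hβlim hβ happrox hmono hsetup
end

section
/- Fix K, L, M, the partitions {K_n}, {L_n}, and the families 𝒦, ℒ, ℳ. Let 𝔸⁰ = ⟨X⁰, ℬ⁰, ℱ⁰⟩ be an approximation and let ⟨H₀, H₁⟩ be a partition of X⁰ such that for some n ∈ ω: (1) H_i ∩ D is infinite for each i < 2 and each infinite D ∈ 𝒟(𝔸⁰, n), and (2) F⁰_y ⊆* H_i for each i < 2 and each y ∈ H_i ∩ γ⁰. Then there is an approximation 𝔸¹ ⪰ 𝔸⁰, with the same underlying set X⁰ and the same family ℱ⁰, such that H₀ and H₁ belong to ℬ¹. -/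
/-- The family `𝒟(𝔸, n) = {B ∩ K_j, B ∩ L_j, B ∩ M : B ∈ ℬ, n ≤ j < ω}` associated to an
approximation with base `⟨B i : i < ν⟩`. -/
def DDfam {α : Type*} (M : Set α) (Kp Lp : ℕ → Set α)
    (ν : Ordinal) (B : Ordinal → Set α) (n : ℕ) : Set (Set α) :=
  {D | ∃ i < ν, (∃ j : ℕ, n ≤ j ∧ D = B i ∩ Kp j) ∨
                (∃ j : ℕ, n ≤ j ∧ D = B i ∩ Lp j) ∨ D = B i ∩ M}

/-- Lemma `lm:a0a1partition`.  Let `𝔸⁰` be an approximation and `⟨H₀, H₁⟩` a partition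
of its underlying set `X⁰` such that for some `n ∈ ω`: (1) `H_i ∩ D` is infinite for
each `i < 2` and each infinite `D ∈ 𝒟(𝔸⁰, n)`, and (2) `F⁰_y ⊆* H_i` for each `i < 2`
and each `y ∈ H_i ∩ γ⁰`.  Then there is an approximation `𝔸¹ ⪰ 𝔸⁰` with the same
underlying set and the same family `ℱ⁰` such that `H₀, H₁ ∈ ℬ¹`. -/
theorem partition_approx {α : Type*} (K L M : Set α) (Kp Lp : ℕ → Set α)
    (emb : Ordinal → α) (hsetup : SetupKLM K L M Kp Lp emb)
    (γ0 ν0 : Ordinal) (B0 F0 : Ordinal → Set α)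
    (h0 : IsApprox K L M Kp Lp emb γ0 ν0 B0 F0)
    (H0 H1 : Set α) (n : ℕ)
    (hpartU : H0 ∪ H1 = carrierOf K L M emb γ0)
    (hpartD : Disjoint H0 H1)
    (h1 : ∀ D ∈ DDfam M Kp Lp ν0 B0 n, D.Infinite →
      (H0 ∩ D).Infinite ∧ (H1 ∩ D).Infinite)
    (h2 : ∀ y < γ0, (emb y ∈ H0 → (F0 y \ H0).Finite) ∧
      (emb y ∈ H1 → (F0 y \ H1).Finite)) :
    ∃ (ν1 : Ordinal) (B1 : Ordinal → Set α),
      IsApprox K L M Kp Lp emb γ0 ν1 B1 F0 ∧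
      ApproxLE K L M Kp Lp emb γ0 ν0 B0 F0 γ0 ν1 B1 F0 ∧
      (∃ i < ν1, B1 i = H0) ∧ (∃ i < ν1, B1 i = H1) := by
  classical
  obtain ⟨hγ, hν, hXc, hdesc, hF, hB⟩ := h0
  obtain ⟨hsub, hcover, hbase, hcompl, hhaus⟩ := hdesc
  set X := carrierOf K L M emb γ0 with hXdef
  set s2 := ν0 + ν0 with hs2
  set s3 := ν0 + ν0 + ν0 with hs3
  set ν1 := ν0 + ν0 + ν0 + 2 with hν1
  set B1 : Ordinal → Set α := fun i =>
    if i < ν0 then B0 i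
    else if i < s2 then B0 (i - ν0) ∩ H0
    else if i < s3 then B0 (i - s2) ∩ H1
    else if i = s3 then H0 else H1 with hB1def
  have hH0X : H0 ⊆ X := by rw [← hpartU]; exact Set.subset_union_left
  have hH1X : H1 ⊆ X := by rw [← hpartU]; exact Set.subset_union_right
  have hmemX : ∀ x ∈ X, x ∉ H0 → x ∈ H1 := by
    intro x hx hx0
    rw [← hpartU] at hx
    exact hx.resolve_left hx0
  -- ordinal index facts
  have hν0le1 : ν0 ≤ ν1 := by
    calc ν0 ≤ s3 := le_self_add |>.trans (le_self_add)
    _ ≤ ν1 := le_self_add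
  have hold : ∀ i < ν0, B1 i = B0 i := by
    intro i hi; simp only [hB1def, if_pos hi]
  have hidx1 : ∀ j < ν0, ν0 + j < ν1 ∧ B1 (ν0 + j) = B0 j ∩ H0 := by
    intro j hj
    have h1 : ¬ (ν0 + j < ν0) := not_lt.2 (le_self_add)
    have h2 : ν0 + j < s2 := by rw [hs2]; exact add_lt_add_right hj ν0
    refine ⟨lt_of_lt_of_le h2 ?_, ?_⟩
    · calc s2 ≤ s3 := le_self_add
      _ ≤ ν1 := le_self_add
    · simp only [hB1def, if_neg h1, if_pos h2, Ordinal.add_sub_cancel]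
  have hidx2 : ∀ j < ν0, s2 + j < ν1 ∧ B1 (s2 + j) = B0 j ∩ H1 := by
    intro j hj
    have h1 : ¬ (s2 + j < ν0) := not_lt.2 ((le_self_add).trans (le_self_add))
    have h2 : ¬ (s2 + j < s2) := not_lt.2 (le_self_add)
    have h3 : s2 + j < s3 := by rw [hs3]; exact add_lt_add_right hj s2
    refine ⟨lt_of_lt_of_le h3 (le_self_add), ?_⟩
    simp only [hB1def, if_neg h1, if_neg h2, if_pos h3, Ordinal.add_sub_cancel]
  have hs3nlt : ∀ k : Ordinal, s3 ≤ k → ¬ (k < ν0) ∧ ¬ (k < s2) ∧ ¬ (k < s3) := by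
    intro k hk
    have hν0s3 : ν0 ≤ s3 := le_self_add |>.trans (le_self_add)
    have hs2s3 : s2 ≤ s3 := le_self_add
    exact ⟨not_lt.2 (hν0s3.trans hk), not_lt.2 (hs2s3.trans hk), not_lt.2 hk⟩
  have hidx3 : s3 < ν1 ∧ B1 s3 = H0 := by
    obtain ⟨h1, h2, h3⟩ := hs3nlt s3 le_rfl
    constructor
    · rw [hν1]
      exact (lt_add_one s3).trans (add_lt_add_right one_lt_two s3)
    · simp only [hB1def, if_neg h1, if_neg h2, if_neg h3, eq_self_iff_true, if_true]
  have hidx4 : s3 + 1 < ν1 ∧ B1 (s3 + 1) = H1 := by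
    obtain ⟨h1, h2, h3⟩ := hs3nlt (s3 + 1) (le_self_add)
    have hne : s3 + 1 ≠ s3 := by
      intro h
      exact absurd (h ▸ lt_add_one s3) (lt_irrefl _)
    constructor
    · rw [hν1]
      exact add_lt_add_right one_lt_two s3
    · simp only [hB1def, if_neg h1, if_neg h2, if_neg h3, if_neg hne]
  -- classification of B1 i for i < ν1
  have hclass : ∀ i < ν1, ∃ P Q : Set α, B1 i = P ∩ Q ∧
      ((∃ j < ν0, P = B0 j) ∨ P = X) ∧ (Q = X ∨ Q = H0 ∨ Q = H1) := by
    intro i hi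
    by_cases h1 : i < ν0
    · refine ⟨B0 i, X, ?_, Or.inl ⟨i, h1, rfl⟩, Or.inl rfl⟩
      rw [hold i h1, Set.inter_eq_left.2 (hsub i h1)]
    by_cases h2 : i < s2
    · have hpos : 0 < ν0 := by
        rcases eq_zero_or_pos ν0 with h | h
        · exfalso; rw [hs2, h, add_zero] at h2; exact h1 (h ▸ h2)
        · exact h
      have hj : i - ν0 < ν0 := Ordinal.sub_lt_of_lt_add (hs2 ▸ h2) hpos
      refine ⟨B0 (i - ν0), H0, ?_, Or.inl ⟨_, hj, rfl⟩, Or.inr (Or.inl rfl)⟩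
      simp only [hB1def, if_neg h1, if_pos h2]
    by_cases h3 : i < s3
    · have hpos : 0 < ν0 := by
        rcases eq_zero_or_pos ν0 with h | h
        · exact absurd (lt_of_lt_of_le h3 (by simp [hs3, hs2, h])) h2
        · exact h
      have hj : i - s2 < ν0 := Ordinal.sub_lt_of_lt_add (hs3 ▸ h3) hpos
      refine ⟨B0 (i - s2), H1, ?_, Or.inl ⟨_, hj, rfl⟩, Or.inr (Or.inr rfl)⟩
      simp only [hB1def, if_neg h1, if_neg h2, if_pos h3]
    by_cases h4 : i = s3
    · refine ⟨X, H0, ?_, Or.inr rfl, Or.inr (Or.inl rfl)⟩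
      simp only [hB1def, if_neg h1, if_neg h2, if_neg h3, if_pos h4]
      exact (Set.inter_eq_right.2 hH0X).symm
    · refine ⟨X, H1, ?_, Or.inr rfl, Or.inr (Or.inr rfl)⟩
      simp only [hB1def, if_neg h1, if_neg h2, if_neg h3, if_neg h4]
      exact (Set.inter_eq_right.2 hH1X).symm
  -- existence of indices for B0 j ∩ Q
  have hex : ∀ j < ν0, ∀ Q : Set α, (Q = X ∨ Q = H0 ∨ Q = H1) →
      ∃ i < ν1, B1 i = B0 j ∩ Q := by
    intro j hj Q hQ
    rcases hQ with rfl | rfl | rfl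
    · exact ⟨j, lt_of_lt_of_le hj hν0le1,
        (hold j hj).trans (Set.inter_eq_left.2 (hsub j hj)).symm⟩
    · exact ⟨ν0 + j, (hidx1 j hj).1, (hidx1 j hj).2⟩
    · exact ⟨s2 + j, (hidx2 j hj).1, (hidx2 j hj).2⟩
  -- generalized base property for "P-parts"
  have hPbase : ∀ P P' : Set α, ((∃ j < ν0, P = B0 j) ∨ P = X) →
      ((∃ j < ν0, P' = B0 j) ∨ P' = X) → ∀ x ∈ P ∩ P',
      ∃ k < ν0, x ∈ B0 k ∧ B0 k ⊆ P ∩ P' := by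
    intro P P' hP hP' x hx
    rcases hP with ⟨j, hj, rfl⟩ | rfl
    · rcases hP' with ⟨j', hj', rfl⟩ | rfl
      · exact hbase j hj j' hj' x hx
      · exact ⟨j, hj, hx.1, fun z hz => ⟨hz, hsub j hj hz⟩⟩
    · rcases hP' with ⟨j', hj', rfl⟩ | rfl
      · exact ⟨j', hj', hx.2, fun z hz => ⟨hsub j' hj' hz, hz⟩⟩
      · have hxX : x ∈ (⋃ i ∈ Set.Iio ν0, B0 i) := hcover.symm ▸ hx.1
        simp only [Set.mem_iUnion, Set.mem_Iio] at hxX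
        obtain ⟨k, hk, hxk⟩ := hxX
        exact ⟨k, hk, hxk, fun z hz => ⟨hsub k hk hz, hsub k hk hz⟩⟩
  -- intersection of "Q-parts"
  have hQbase : ∀ Q Q' : Set α, (Q = X ∨ Q = H0 ∨ Q = H1) →
      (Q' = X ∨ Q' = H0 ∨ Q' = H1) → ∀ x ∈ Q ∩ Q',
      ∃ R : Set α, (R = X ∨ R = H0 ∨ R = H1) ∧ x ∈ R ∧ R ⊆ Q ∩ Q' := by
    intro Q Q' hQ hQ' x hx
    have hQX : ∀ R : Set α, (R = X ∨ R = H0 ∨ R = H1) → R ⊆ X := by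
      intro R hR
      rcases hR with h | h | h
      · exact h ▸ subset_rfl
      · exact h ▸ hH0X
      · exact h ▸ hH1X
    by_cases hq : Q = X
    · exact ⟨Q', hQ', hx.2, fun z hz => ⟨hq ▸ (hQX Q' hQ' hz), hz⟩⟩
    by_cases hq' : Q' = X
    · exact ⟨Q, hQ, hx.1, fun z hz => ⟨hz, hq' ▸ (hQX Q hQ hz)⟩⟩
    rcases hQ.resolve_left hq with h | h <;> rcases hQ'.resolve_left hq' with h' | h'
    · exact ⟨Q, hQ, hx.1, fun z hz => ⟨hz, by rw [h']; rw [h] at hz; exact hz⟩⟩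
    · exact absurd rfl (hpartD.ne_of_mem (h ▸ hx.1) (h' ▸ hx.2))
    · exact absurd rfl (hpartD.ne_of_mem (h' ▸ hx.2) (h ▸ hx.1))
    · exact ⟨Q, hQ, hx.1, fun z hz => ⟨hz, by rw [h']; rw [h] at hz; exact hz⟩⟩
  -- all B1 i are subsets of X
  have hsub1 : ∀ i < ν1, B1 i ⊆ X := by
    intro i hi
    obtain ⟨P, Q, hPQ, hP, hQ⟩ := hclass i hi
    rw [hPQ]
    rcases hP with ⟨j, hj, rfl⟩ | rfl
    · exact (Set.inter_subset_left).trans (hsub j hj)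
    · exact Set.inter_subset_left
  -- new description
  have hdesc1 : IsDescription X ν1 B1 := by
    refine ⟨hsub1, ?_, ?_, ?_, ?_⟩
    · apply Set.Subset.antisymm
      · intro x hx
        simp only [Set.mem_iUnion, Set.mem_Iio] at hx
        obtain ⟨i, hi, hxi⟩ := hx
        exact hsub1 i hi hxi
      · intro x hx
        have hxX : x ∈ (⋃ i ∈ Set.Iio ν0, B0 i) := hcover.symm ▸ hx
        simp only [Set.mem_iUnion, Set.mem_Iio] at hxX ⊢
        obtain ⟨k, hk, hxk⟩ := hxX
        exact ⟨k, lt_of_lt_of_le hk hν0le1, (hold k hk).symm ▸ hxk⟩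
    · intro i hi j hj x hx
      obtain ⟨P, Q, hPQ, hP, hQ⟩ := hclass i hi
      obtain ⟨P', Q', hPQ', hP', hQ'⟩ := hclass j hj
      rw [hPQ] at hx; rw [hPQ']
      have hx1 : x ∈ P ∩ P' := ⟨hx.1.1, (hPQ' ▸ hx.2).1⟩
      have hx2 : x ∈ Q ∩ Q' := ⟨hx.1.2, (hPQ' ▸ hx.2).2⟩
      obtain ⟨k, hk, hxk, hks⟩ := hPbase P P' hP hP' x hx1
      obtain ⟨R, hR, hxR, hRs⟩ := hQbase Q Q' hQ hQ' x hx2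
      obtain ⟨m, hm, hBm⟩ := hex k hk R hR
      refine ⟨m, hm, hBm ▸ ⟨hxk, hxR⟩, ?_⟩
      rw [hBm, hPQ]
      intro z hz
      exact ⟨⟨(hks hz.1).1, (hRs hz.2).1⟩, (hks hz.1).2, (hRs hz.2).2⟩
    · intro i hi
      refine ⟨Set.diff_subset, ?_⟩
      intro x hx
      obtain ⟨P, Q, hPQ, hP, hQ⟩ := hclass i hi
      rw [hPQ] at hx
      have hxX := hx.1
      by_cases hxQ : x ∈ Q
      · have hxP : x ∉ P := fun h => hx.2 ⟨h, hxQ⟩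
        rcases hP with ⟨j, hj, rfl⟩ | rfl
        · obtain ⟨k, hk, hxk, hks⟩ := (hcompl j hj).2 x ⟨hxX, hxP⟩
          refine ⟨k, lt_of_lt_of_le hk hν0le1, (hold k hk).symm ▸ hxk, ?_⟩
          rw [hold k hk, hPQ]
          intro z hz
          exact ⟨(hks hz).1, fun hzz => (hks hz).2 hzz.1⟩
        · exact absurd hxX hxP
      · rcases hQ with rfl | rfl | rfl
        · exact absurd hxX hxQ
        · have hx1 : x ∈ H1 := hmemX x hxX hxQ
          refine ⟨s3 + 1, hidx4.1, hidx4.2.symm ▸ hx1, ?_⟩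
          rw [hidx4.2, hPQ]
          intro z hz
          exact ⟨hH1X hz, fun hzz => hpartD.symm.ne_of_mem hz hzz.2 rfl⟩
        · have hx0 : x ∈ H0 := by
            rw [← hpartU] at hxX
            exact hxX.resolve_right hxQ
          refine ⟨s3, hidx3.1, hidx3.2.symm ▸ hx0, ?_⟩
          rw [hidx3.2, hPQ]
          intro z hz
          exact ⟨hH0X hz, fun hzz => hpartD.ne_of_mem hz hzz.2 rfl⟩
    · intro x hx y hy hxy
      obtain ⟨i, hi, j, hj, hxi, hyj, hdisj⟩ := hhaus x hx y hy hxy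
      exact ⟨i, lt_of_lt_of_le hi hν0le1, j, lt_of_lt_of_le hj hν0le1,
        (hold i hi).symm ▸ hxi, (hold j hj).symm ▸ hyj,
        by rw [hold i hi, hold j hj]; exact hdisj⟩
  -- ν1 < ω₁
  have hν1lt : ν1 < (Cardinal.aleph 1).ord := by
    have hp := Ordinal.isPrincipal_add_ord (Cardinal.aleph0_le_aleph 1)
    have h2 : (2 : Ordinal) < (Cardinal.aleph 1).ord := by
      have hω : (Ordinal.omega0 : Ordinal) ≤ (Cardinal.aleph 1).ord := by
        rw [← Cardinal.ord_aleph0]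
        exact Cardinal.ord_le_ord.2 (Cardinal.aleph0_le_aleph 1)
      exact lt_of_lt_of_le (Ordinal.nat_lt_omega0 2) hω
    exact hp (hp (hp hν hν) hν) h2
  -- convergence in the new topology
  have hconv : ∀ y < γ0, ConvIn X ν1 B1 (F0 y) (emb y) := by
    intro y hy U hU hyU
    obtain ⟨i, hi, hyi, hiU⟩ := hU.2 (emb y) hyU
    obtain ⟨P, Q, hPQ, hP, hQ⟩ := hclass i hi
    rw [hPQ] at hyi hiU
    have hFX : F0 y ⊆ X := by
      obtain ⟨-, hmem, -⟩ := hF y hy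
      have : F0 y ⊆ K ∪ L ∪ M := by
        rcases hmem with ⟨h, -⟩ | ⟨h, -⟩ | h
        · exact h.trans ((Set.subset_union_left).trans Set.subset_union_left)
        · exact h.trans ((Set.subset_union_right).trans Set.subset_union_left)
        · exact h.trans Set.subset_union_right
      exact this.trans Set.subset_union_left
    have hfin : (F0 y \ (P ∩ Q)).Finite := by
      have hsplit : F0 y \ (P ∩ Q) ⊆ (F0 y \ P) ∪ (F0 y \ Q) := by
        intro z hz
        by_cases hzP : z ∈ P
        · exact Or.inr ⟨hz.1, fun h => hz.2 ⟨hzP, h⟩⟩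
        · exact Or.inl ⟨hz.1, hzP⟩
      have hfP : (F0 y \ P).Finite := by
        rcases hP with ⟨j, hj, rfl⟩ | rfl
        · have hopen : IsOpenIn X ν0 B0 (B0 j) :=
            ⟨hsub j hj, fun z hz => ⟨j, hj, hz, subset_rfl⟩⟩
          exact (hF y hy).2.2 (B0 j) hopen hyi.1
        · rw [Set.diff_eq_empty.2 hFX]
          exact Set.finite_empty
      have hfQ : (F0 y \ Q).Finite := by
        rcases hQ with rfl | rfl | rfl
        · rw [Set.diff_eq_empty.2 hFX]
          exact Set.finite_empty
        · exact (h2 y hy).1 hyi.2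
        · exact (h2 y hy).2 hyi.2
      exact ((hfP.union hfQ).subset hsplit)
    exact hfin.subset (fun z hz => ⟨hz.1, fun h => hz.2 (hiU h)⟩)
  -- the infinite-intersection conditions for B1
  have hinf1 : ∀ i < ν1, (B1 i ∩ M).Infinite ∧
      ∃ N : ℕ, ∀ m ≥ N, (B1 i ∩ Kp m).Infinite ∧ (B1 i ∩ Lp m).Infinite := by
    intro i hi
    obtain ⟨P, Q, hPQ, hP, hQ⟩ := hclass i hi
    -- get a j0 < ν0 in case P = X
    have hXne : X.Nonempty := by
      obtain ⟨hKc, hKi, -⟩ := hsetup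
      obtain ⟨x, hx⟩ := hKi.nonempty
      exact ⟨x, Set.subset_union_left (Set.subset_union_left (Set.subset_union_left hx))⟩
    obtain ⟨j, hj, hPj⟩ : ∃ j < ν0, P ⊇ B0 j := by
      rcases hP with ⟨j, hj, rfl⟩ | rfl
      · exact ⟨j, hj, subset_rfl⟩
      · obtain ⟨x, hx⟩ := hXne
        have hxX : x ∈ (⋃ i ∈ Set.Iio ν0, B0 i) := hcover.symm ▸ hx
        simp only [Set.mem_iUnion, Set.mem_Iio] at hxX
        obtain ⟨k, hk, -⟩ := hxX
        exact ⟨k, hk, hsub k hk⟩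
    obtain ⟨hjM, N, hjN⟩ := hB j hj
    have hQinf : ∀ D : Set α, D ∈ DDfam M Kp Lp ν0 B0 n → D.Infinite → (Q ∩ D).Infinite := by
      intro D hD hDinf
      rcases hQ with rfl | rfl | rfl
      · refine hDinf.mono ?_
        intro z hz
        obtain ⟨k, hk, hcase⟩ := hD
        have hzB : z ∈ B0 k := by
          rcases hcase with ⟨m, -, rfl⟩ | ⟨m, -, rfl⟩ | rfl
          exacts [hz.1, hz.1, hz.1]
        exact ⟨hsub k hk hzB, hz⟩
      · exact (h1 D hD hDinf).1
      · exact (h1 D hD hDinf).2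
    constructor
    · have hDM : (B0 j ∩ M) ∈ DDfam M Kp Lp ν0 B0 n := ⟨j, hj, Or.inr (Or.inr rfl)⟩
      have := hQinf _ hDM hjM
      refine this.mono ?_
      intro z hz
      rw [hPQ]
      exact ⟨⟨hPj hz.2.1, hz.1⟩, hz.2.2⟩
    · refine ⟨max N n, fun m hm => ?_⟩
      have hmN : N ≤ m := le_trans (le_max_left _ _) hm
      have hmn : n ≤ m := le_trans (le_max_right _ _) hm
      obtain ⟨hjK, hjL⟩ := hjN m hmN
      constructor
      · have hDK : (B0 j ∩ Kp m) ∈ DDfam M Kp Lp ν0 B0 n :=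
          ⟨j, hj, Or.inl ⟨m, hmn, rfl⟩⟩
        refine (hQinf _ hDK hjK).mono ?_
        intro z hz
        rw [hPQ]
        exact ⟨⟨hPj hz.2.1, hz.1⟩, hz.2.2⟩
      · have hDL : (B0 j ∩ Lp m) ∈ DDfam M Kp Lp ν0 B0 n :=
          ⟨j, hj, Or.inr (Or.inl ⟨m, hmn, rfl⟩)⟩
        refine (hQinf _ hDL hjL).mono ?_
        intro z hz
        rw [hPQ]
        exact ⟨⟨hPj hz.2.1, hz.1⟩, hz.2.2⟩
  refine ⟨ν1, B1, ?_, ?_, ⟨s3, hidx3.1, hidx3.2⟩, ⟨s3 + 1, hidx4.1, hidx4.2⟩⟩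
  · exact ⟨hγ, hν1lt, hXc, hdesc1,
      fun y hy => ⟨(hF y hy).1, (hF y hy).2.1, hconv y hy⟩, hinf1⟩
  · refine ⟨le_rfl, ⟨subset_rfl, hν0le1, ?_, ?_, ?_⟩, ?_⟩
    · intro i hi
      rw [hold i hi]
      exact Set.inter_eq_left.2 (hsub i hi)
    · intro i hi j hj
      rw [hold i hi, hold j hj]
    · intro i hi j hj
      rw [hold i hi, hold j hj]
    · intro y hy
      exact ⟨fun _ => rfl, fun _ => by simp⟩
end

section
/- Fix K, L, M, the partitions {K_n}, {L_n}, and the families 𝒦, ℒ, ℳ. Let 𝔸⁰ be a countable approximation and let K' ∈ 𝒦 be infinite. Then there is a countable approximation 𝔸¹ ⪰ 𝔸⁰ such that F¹_y ∩ K' is infinite for some y ∈ γ¹. -/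
namespace RefineAux

def enc (t a b c : ℕ) : ℕ := 7 * Nat.pair a (Nat.pair b c) + t

def dT (r : ℕ) : ℕ := r % 7
def dA (r : ℕ) : ℕ := (Nat.unpair (r / 7)).1
def dB (r : ℕ) : ℕ := (Nat.unpair ((Nat.unpair (r / 7)).2)).1
def dC (r : ℕ) : ℕ := (Nat.unpair ((Nat.unpair (r / 7)).2)).2

lemma dT_enc (t a b c : ℕ) (ht : t < 7) : dT (enc t a b c) = t := by
  simp [dT, enc, Nat.mul_add_mod, Nat.mod_eq_of_lt ht]

lemma div_enc (t a b c : ℕ) (ht : t < 7) : (enc t a b c) / 7 = Nat.pair a (Nat.pair b c) := by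
  simp [enc, Nat.mul_add_div, Nat.div_eq_of_lt ht]

lemma dA_enc (t a b c : ℕ) (ht : t < 7) : dA (enc t a b c) = a := by
  simp [dA, div_enc t a b c ht]

lemma dB_enc (t a b c : ℕ) (ht : t < 7) : dB (enc t a b c) = b := by
  simp [dB, div_enc t a b c ht]

lemma dC_enc (t a b c : ℕ) (ht : t < 7) : dC (enc t a b c) = c := by
  simp [dC, div_enc t a b c ht]

lemma enc_inj_c {t a b c c' : ℕ} (ht : t < 7) (h : enc t a b c = enc t a b c') : c = c' := by
  have := congrArg dC h
  rwa [dC_enc t a b c ht, dC_enc t a b c' ht] at this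

end RefineAux

namespace RefineAux

/-- Greedy injective picker. -/
lemma exists_picker {α : Type*} (T : ℕ → Set α) (hT : ∀ r, (T r).Infinite) :
    ∃ f : ℕ → α, Function.Injective f ∧ ∀ r, f r ∈ T r := by
  classical
  have key : ∀ (r : ℕ) (s : Finset α), ∃ x, x ∈ T r \ ↑s :=
    fun r s => ((hT r).diff s.finite_toSet).nonempty
  choose pick hpick using key
  let F : ℕ → Finset α := fun r => Nat.rec ∅ (fun r s => insert (pick r s) s) r
  have hFsucc : ∀ r, F (r + 1) = insert (pick r (F r)) (F r) := fun r => rfl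
  have hmono : ∀ (r d : ℕ), F r ⊆ F (r + d) := by
    intro r d
    induction d with
    | zero => exact fun x hx => hx
    | succ d ih =>
        intro x hx
        have : r + (d + 1) = (r + d) + 1 := by omega
        rw [this, hFsucc (r + d)]
        exact Finset.mem_insert_of_mem (ih hx)
  have hmono' : ∀ {r r' : ℕ}, r ≤ r' → F r ⊆ F r' := by
    intro r r' h
    obtain ⟨d, rfl⟩ := Nat.exists_eq_add_of_le h
    exact hmono r d
  refine ⟨fun r => pick r (F r), ?_, fun r => (hpick r (F r)).1⟩
  have hnotmem : ∀ r, pick r (F r) ∉ F r := fun r => by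
    have := (hpick r (F r)).2
    simpa using this
  have hmem : ∀ r, pick r (F r) ∈ F (r + 1) := fun r => by
    rw [hFsucc r]; exact Finset.mem_insert_self _ _
  intro a b hab
  simp only at hab
  by_contra hne
  rcases Nat.lt_or_ge a b with h | h
  · exact hnotmem b (by rw [← hab]; exact hmono' (Nat.succ_le_of_lt h) (hmem a))
  · have h' : b < a := lt_of_le_of_ne h (fun e => hne e.symm)
    exact hnotmem a (by rw [hab]; exact hmono' (Nat.succ_le_of_lt h') (hmem b))

/-- Enumeration of a countable nonempty set. -/
lemma exists_enum {β : Type*} {S : Set β} (hc : S.Countable) (hne : S.Nonempty) :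
    ∃ f : ℕ → β, (∀ n, f n ∈ S) ∧ ∀ x ∈ S, ∃ n, f n = x := by
  obtain ⟨f, hf⟩ := hc.exists_eq_range hne
  exact ⟨f, fun n => hf ▸ Set.mem_range_self n, fun x hx => by rw [hf] at hx; exact hx⟩

lemma ord_split {ν0 i : Ordinal} (h : i < ν0 + Ordinal.omega0) :
    i < ν0 ∨ ∃ n : ℕ, i = ν0 + (n : Ordinal) := by
  rcases lt_or_ge i ν0 with h' | h'
  · exact Or.inl h'
  · right
    have hc : ν0 + (i - ν0) = i := Ordinal.add_sub_cancel_of_le h'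
    have : i - ν0 < Ordinal.omega0 := by
      rw [← add_lt_add_iff_left ν0, hc]; exact h
    obtain ⟨n, hn⟩ := Ordinal.lt_omega0.mp this
    exact ⟨n, by rw [← hc, hn]⟩

lemma card_lt_omega1_of_lt {o : Ordinal} (h : o < (Cardinal.aleph 1).ord) :
    o.card ≤ Cardinal.aleph0 := by
  have := Cardinal.lt_ord.mp h
  rwa [← Cardinal.succ_aleph0, Order.lt_succ_iff] at this

lemma add_omega_lt_omega1 {o : Ordinal} (h : o < (Cardinal.aleph 1).ord) :
    o + Ordinal.omega0 < (Cardinal.aleph 1).ord := by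
  rw [Cardinal.lt_ord, Ordinal.card_add, Ordinal.card_omega0]
  calc o.card + Cardinal.aleph0 ≤ Cardinal.aleph0 + Cardinal.aleph0 :=
        add_le_add (card_lt_omega1_of_lt h) (le_refl _)
    _ = Cardinal.aleph0 := Cardinal.aleph0_add_aleph0
    _ < Cardinal.aleph 1 := Cardinal.aleph0_lt_aleph_one

lemma add_one_lt_omega1 {o : Ordinal} (h : o < (Cardinal.aleph 1).ord) :
    o + 1 < (Cardinal.aleph 1).ord := by
  rw [Cardinal.lt_ord, Ordinal.card_add, Ordinal.card_one]
  calc o.card + 1 ≤ Cardinal.aleph0 + Cardinal.aleph0 :=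
        add_le_add (card_lt_omega1_of_lt h) Cardinal.one_le_aleph0
    _ = Cardinal.aleph0 := Cardinal.aleph0_add_aleph0
    _ < Cardinal.aleph 1 := Cardinal.aleph0_lt_aleph_one

lemma countable_Iio_of_lt_omega1 {o : Ordinal} (h : o < (Cardinal.aleph 1).ord) :
    (Set.Iio o).Countable := by
  rw [Cardinal.countable_iff_lt_aleph_one, Ordinal.mk_Iio_ordinal]
  have h1 : o.card ≤ Cardinal.aleph0 := card_lt_omega1_of_lt h
  calc Cardinal.lift.{_ + 1} o.card ≤ Cardinal.lift Cardinal.aleph0 :=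
        Cardinal.lift_le.mpr h1
    _ = Cardinal.aleph0 := by simp
    _ < Cardinal.aleph 1 := Cardinal.aleph0_lt_aleph_one

end RefineAux
namespace RefineAux

variable {α : Type*} {Xc : Set α} {ν : Ordinal} {B : Ordinal → Set α}

lemma isOpenIn_basic (hd : IsDescription Xc ν B) {i : Ordinal} (hi : i < ν) :
    IsOpenIn Xc ν B (B i) :=
  ⟨hd.1 i hi, fun x hx => ⟨i, hi, hx, subset_rfl⟩⟩

lemma isOpenIn_inter (hd : IsDescription Xc ν B) {U V : Set α}
    (hU : IsOpenIn Xc ν B U) (hV : IsOpenIn Xc ν B V) : IsOpenIn Xc ν B (U ∩ V) := by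
  refine ⟨fun x hx => hU.1 hx.1, fun x hx => ?_⟩
  obtain ⟨i, hi, hxi, hiU⟩ := hU.2 x hx.1
  obtain ⟨j, hj, hxj, hjV⟩ := hV.2 x hx.2
  obtain ⟨k, hk, hxk, hkij⟩ := hd.2.2.1 i hi j hj x ⟨hxi, hxj⟩
  exact ⟨k, hk, hxk, fun z hz => ⟨hiU (hkij hz).1, hjV (hkij hz).2⟩⟩

lemma isOpenIn_union {U V : Set α}
    (hU : IsOpenIn Xc ν B U) (hV : IsOpenIn Xc ν B V) : IsOpenIn Xc ν B (U ∪ V) := by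
  refine ⟨Set.union_subset hU.1 hV.1, fun x hx => ?_⟩
  rcases hx with hx | hx
  · obtain ⟨i, hi, hxi, hiU⟩ := hU.2 x hx
    exact ⟨i, hi, hxi, hiU.trans Set.subset_union_left⟩
  · obtain ⟨i, hi, hxi, hiV⟩ := hV.2 x hx
    exact ⟨i, hi, hxi, hiV.trans Set.subset_union_right⟩

lemma isOpenIn_diff (hd : IsDescription Xc ν B) {U V : Set α}
    (hU : IsOpenIn Xc ν B U) (hVc : IsOpenIn Xc ν B (Xc \ V)) :
    IsOpenIn Xc ν B (U \ V) := by
  have : U \ V = U ∩ (Xc \ V) := by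
    ext z; constructor
    · exact fun hz => ⟨hz.1, hU.1 hz.1, hz.2⟩
    · exact fun hz => ⟨hz.1, hz.2.2⟩
  rw [this]
  exact isOpenIn_inter hd hU hVc

lemma compl_inter_eq {U V : Set α} :
    Xc \ (U ∩ V) = (Xc \ U) ∪ (Xc \ V) := by
  ext z; by_cases hz : z ∈ Xc <;> by_cases hzU : z ∈ U <;> by_cases hzV : z ∈ V <;> simp [hz, hzU, hzV]

lemma compl_diff_eq {U V : Set α} (hV : V ⊆ Xc) :
    Xc \ (U \ V) = (Xc \ U) ∪ V := by
  ext z; constructor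
  · rintro ⟨hzX, hz⟩
    by_cases hzV : z ∈ V
    · exact Or.inr hzV
    · exact Or.inl ⟨hzX, fun hzU => hz ⟨hzU, hzV⟩⟩
  · rintro (⟨hzX, hzU⟩ | hzV)
    · exact ⟨hzX, fun h => hzU h.1⟩
    · exact ⟨hV hzV, fun h => h.2 hzV⟩

end RefineAux
open RefineAux in
set_option maxHeartbeats 1000000 in
/-- Lemma `lm:refine2`.  Let `𝔸⁰` be a countable approximation and let `K' ∈ 𝒦` be
infinite.  Then there is a countable approximation `𝔸¹ ⪰ 𝔸⁰` such that `F¹_y ∩ K'` is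
infinite for some `y < γ¹`. -/
theorem refine_approx_K {α : Type*} (K L M : Set α) (Kp Lp : ℕ → Set α)
    (emb : Ordinal → α) (hsetup : SetupKLM K L M Kp Lp emb)
    (γ0 ν0 : Ordinal) (B0 F0 : Ordinal → Set α)
    (h0 : IsApprox K L M Kp Lp emb γ0 ν0 B0 F0)
    (K' : Set α) (hK' : MemKK K Kp K') (hK'inf : K'.Infinite) :
    ∃ (γ1 ν1 : Ordinal) (B1 F1 : Ordinal → Set α),
      IsApprox K L M Kp Lp emb γ1 ν1 B1 F1 ∧
      ApproxLE K L M Kp Lp emb γ0 ν0 B0 F0 γ1 ν1 B1 F1 ∧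
      ∃ y < γ1, (F1 y ∩ K').Infinite := by
  classical
  obtain ⟨hKc, hKinf, hLc, hLinf, hMc, hMinf, hKL, hKM, hLM, hKpU, hKpD, hKpI,
    hLpU, hLpD, hLpI, hembInj, hembNot⟩ := hsetup
  obtain ⟨hγ0, hν0, hX0c, hdesc0, hF0, hlarge0⟩ := h0
  by_cases hA : ∃ y, y < γ0 ∧ (F0 y ∩ K').Infinite
  · refine ⟨γ0, ν0, B0, F0, ⟨hγ0, hν0, hX0c, hdesc0, hF0, hlarge0⟩,
      ⟨le_refl _, ⟨subset_rfl, le_refl _,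
        fun i hi => Set.inter_eq_left.mpr (hdesc0.1 i hi),
        fun i _ j _ => Iff.rfl, fun i _ j _ => Iff.rfl⟩,
        fun y _ => ⟨fun _ => rfl, fun _ => by simp⟩⟩, ?_⟩
    obtain ⟨y, hy1, hy2⟩ := hA
    exact ⟨y, hy1, hy2⟩
  push_neg at hA
  have hA' : ∀ y, y < γ0 → (F0 y ∩ K').Finite := fun y hy => hA y hy
  set X0 := carrierOf K L M emb γ0 with hX0def
  set p := emb γ0 with hpdef
  -- old description components
  have hax1 : ∀ i < ν0, B0 i ⊆ X0 := hdesc0.1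
  have hax3 : ∀ i < ν0, ∀ j < ν0, ∀ x ∈ B0 i ∩ B0 j,
      ∃ k < ν0, x ∈ B0 k ∧ B0 k ⊆ B0 i ∩ B0 j := hdesc0.2.2.1
  have hax4 : ∀ i < ν0, IsOpenIn X0 ν0 B0 (X0 \ B0 i) := hdesc0.2.2.2.1
  have hax5 : ∀ x ∈ X0, ∀ y ∈ X0, x ≠ y →
      ∃ i < ν0, ∃ j < ν0, x ∈ B0 i ∧ y ∈ B0 j ∧ B0 i ∩ B0 j = ∅ := hdesc0.2.2.2.2
  have hcover : ∀ x ∈ X0, ∃ i, i < ν0 ∧ x ∈ B0 i := by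
    intro x hx
    rw [← hdesc0.2.1] at hx
    simpa using hx
  have hKX0 : K ⊆ X0 := fun x hx => Or.inl (Or.inl (Or.inl hx))
  have hLX0 : L ⊆ X0 := fun x hx => Or.inl (Or.inl (Or.inr hx))
  have hMX0 : M ⊆ X0 := fun x hx => Or.inl (Or.inr hx)
  have hK'K : K' ⊆ K := hK'.1
  have hK'X0 : K' ⊆ X0 := fun x hx => hKX0 (hK'K hx)
  have hKpK : ∀ n, Kp n ⊆ K := fun n => hKpU ▸ Set.subset_iUnion Kp n
  have hLpL : ∀ n, Lp n ⊆ L := fun n => hLpU ▸ Set.subset_iUnion Lp n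
  have hpKLM : p ∉ K ∪ L ∪ M := hembNot γ0 hγ0
  have hpK : p ∉ K := fun h => hpKLM (Or.inl (Or.inl h))
  have hpL : p ∉ L := fun h => hpKLM (Or.inl (Or.inr h))
  have hpM : p ∉ M := fun h => hpKLM (Or.inr h)
  have hpX0 : p ∉ X0 := by
    intro hx
    rcases hx with hx | hx
    · exact hpKLM hx
    · obtain ⟨b, hb, hbe⟩ := hx
      have hb1 : b < (Cardinal.aleph 1).ord := lt_trans hb hγ0
      have : b = γ0 := hembInj b γ0 hb1 hγ0 hbe
      rw [this] at hb
      exact absurd hb (by simp)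
  have hembX0 : ∀ y, y < γ0 → emb y ∈ X0 := fun y hy => Or.inr ⟨y, hy, rfl⟩
  have hembNotKLM : ∀ y, y < γ0 → emb y ∉ K ∪ L ∪ M := fun y hy =>
    hembNot y (lt_trans hy hγ0)
  -- the new carrier
  have hX1eq : carrierOf K L M emb (γ0 + 1) = X0 ∪ {p} := by
    rw [hX0def]
    unfold carrierOf
    have : Set.Iio (γ0 + 1) = Set.Iio γ0 ∪ {γ0} := by
      ext b
      simp only [Set.mem_Iio, Set.mem_union, Set.mem_singleton_iff,
        Ordinal.add_one_eq_succ, Order.lt_succ_iff]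
      exact ⟨fun h => (lt_or_eq_of_le h), fun h => h.elim le_of_lt le_of_eq⟩
    rw [this, Set.image_union, Set.image_singleton]
    ext x
    simp only [Set.mem_union, Set.mem_singleton_iff]
    tauto
  set X1 := carrierOf K L M emb (γ0 + 1) with hX1def
  -- choice of N i
  have hNex : ∀ i, ∃ N : ℕ, i < ν0 → ∀ n ≥ N, (B0 i ∩ Kp n).Infinite ∧ (B0 i ∩ Lp n).Infinite := by
    intro i
    by_cases hi : i < ν0
    · obtain ⟨N, hN⟩ := (hlarge0 i hi).2
      exact ⟨N, fun _ => hN⟩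
    · exact ⟨0, fun h => absurd h hi⟩
  choose N hNsp using hNex
  have hBM : ∀ i < ν0, (B0 i ∩ M).Infinite := fun i hi => (hlarge0 i hi).1
  -- enumeration of basic indices
  have hν0pos : (0 : Ordinal) < ν0 := by
    obtain ⟨x, hx⟩ := hKinf.nonempty
    obtain ⟨i, hi, _⟩ := hcover x (hKX0 hx)
    exact lt_of_le_of_lt (zero_le : (0 : Ordinal) ≤ i) hi
  obtain ⟨e, he1, he2⟩ : ∃ e : ℕ → Ordinal, (∀ n, e n < ν0) ∧ ∀ i < ν0, ∃ n, e n = i := by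
    obtain ⟨f, hf1, hf2⟩ := exists_enum (countable_Iio_of_lt_omega1 hν0) ⟨0, hν0pos⟩
    exact ⟨f, fun n => hf1 n, fun i hi => hf2 i hi⟩
  obtain ⟨eγ, heγ⟩ : ∃ eγ : ℕ → Ordinal, ∀ y < γ0, ∃ t, eγ t = y := by
    by_cases hg : γ0 = 0
    · exact ⟨fun _ => 0, fun y hy => absurd hy (by rw [hg]; exact not_lt_of_ge (zero_le : (0 : Ordinal) ≤ y))⟩
    · obtain ⟨f, hf1, hf2⟩ := exists_enum (countable_Iio_of_lt_omega1 hγ0)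
        ⟨0, pos_iff_ne_zero.mpr hg⟩
      exact ⟨f, fun y hy => hf2 y hy⟩
  obtain ⟨FU, hFUdef⟩ : ∃ FU : ℕ → Set α, ∀ r, FU r =
      ⋃ t ∈ Finset.range r, (if eγ t < γ0 ∧ MemKK K Kp (F0 (eγ t)) then F0 (eγ t) else ∅) :=
    ⟨_, fun _ => rfl⟩
  have hFUK' : ∀ r, (FU r ∩ K').Finite := by
    intro r
    rw [hFUdef, Set.iUnion₂_inter]
    apply Set.Finite.biUnion (Finset.range r).finite_toSet
    intro t _
    split_ifs with h
    · exact hA' _ h.1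
    · simp
  have hFUKp : ∀ r n, (FU r ∩ Kp n).Finite := by
    intro r n
    rw [hFUdef, Set.iUnion₂_inter]
    apply Set.Finite.biUnion (Finset.range r).finite_toSet
    intro t _
    split_ifs with h
    · exact h.2.2 n
    · simp
  have hFUsup : ∀ y, y < γ0 → MemKK K Kp (F0 y) → ∀ t, eγ t = y → ∀ r, t < r → F0 y ⊆ FU r := by
    intro y hy hmem t ht r hr
    rw [hFUdef]
    intro x hx
    refine Set.mem_biUnion (Finset.mem_range.mpr hr) ?_
    rw [if_pos (by rw [ht]; exact ⟨hy, hmem⟩), ht]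
    exact hx
  obtain ⟨C, hC0, hCs⟩ : ∃ C : ℕ → Set α, C 0 = X0 ∧ ∀ m, C (m + 1) =
      if ((C m ∩ B0 (e m)) ∩ K').Infinite then C m ∩ B0 (e m) else C m \ B0 (e m) := by
    refine ⟨fun m => Nat.rec X0 (fun m Cm =>
      if ((Cm ∩ B0 (e m)) ∩ K').Infinite then Cm ∩ B0 (e m) else Cm \ B0 (e m)) m, rfl, fun m => rfl⟩
  have hCprop : ∀ m, (IsOpenIn X0 ν0 B0 (C m) ∧ IsOpenIn X0 ν0 B0 (X0 \ C m))
      ∧ (C m ∩ K').Infinite := by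
    intro m
    induction m with
    | zero =>
      rw [hC0]
      refine ⟨⟨⟨subset_rfl, fun x hx => ?_⟩, ?_⟩, ?_⟩
      · obtain ⟨i, hi, hxi⟩ := hcover x hx
        exact ⟨i, hi, hxi, hax1 i hi⟩
      · rw [Set.diff_self]
        exact ⟨Set.empty_subset _, fun x hx => absurd hx (Set.notMem_empty x)⟩
      · rwa [Set.inter_eq_right.mpr hK'X0]
    | succ m ih =>
      rw [hCs m]
      split_ifs with h
      · refine ⟨⟨isOpenIn_inter hdesc0 ih.1.1 (isOpenIn_basic hdesc0 (he1 m)), ?_⟩, h⟩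
        rw [compl_inter_eq]
        exact isOpenIn_union ih.1.2 (hax4 (e m) (he1 m))
      · refine ⟨⟨isOpenIn_diff hdesc0 ih.1.1 (hax4 (e m) (he1 m)), ?_⟩, ?_⟩
        · rw [compl_diff_eq (hax1 (e m) (he1 m))]
          exact isOpenIn_union ih.1.2 (isOpenIn_basic hdesc0 (he1 m))
        · have hsplit : C m ∩ K' ⊆ ((C m ∩ B0 (e m)) ∩ K') ∪ ((C m \ B0 (e m)) ∩ K') := by
            intro x hx
            by_cases hxB : x ∈ B0 (e m)
            · exact Or.inl ⟨⟨hx.1, hxB⟩, hx.2⟩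
            · exact Or.inr ⟨⟨hx.1, hxB⟩, hx.2⟩
          by_contra hfin
          rw [Set.not_infinite] at hfin h
          exact (ih.2) (Set.Finite.subset (h.union hfin) hsplit)
  have hCopen : ∀ m, IsOpenIn X0 ν0 B0 (C m) := fun m => (hCprop m).1.1
  have hCcopen : ∀ m, IsOpenIn X0 ν0 B0 (X0 \ C m) := fun m => (hCprop m).1.2
  have hCK' : ∀ m, (C m ∩ K').Infinite := fun m => (hCprop m).2
  have hCX0 : ∀ m, C m ⊆ X0 := fun m => (hCopen m).1
  have hCne : ∀ m, (C m).Nonempty := fun m => ((hCK' m).nonempty).imp (fun x hx => hx.1)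
  have hCstep : ∀ m, C (m + 1) ⊆ C m := by
    intro m
    rw [hCs m]
    split_ifs
    · exact Set.inter_subset_left
    · exact Set.diff_subset
  have hCmono : ∀ {m m' : ℕ}, m ≤ m' → C m' ⊆ C m := by
    intro m m' h
    obtain ⟨d, rfl⟩ := Nat.exists_eq_add_of_le h
    clear h
    induction d with
    | zero => exact subset_rfl
    | succ d ih =>
      have he : m + (d + 1) = (m + d) + 1 := by omega
      rw [he]
      exact (hCstep (m + d)).trans ih
  have hdec : ∀ i < ν0, ∃ m, C m ⊆ B0 i ∨ C m ∩ B0 i = ∅ := by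
    intro i hi
    obtain ⟨n, hn⟩ := he2 i hi
    refine ⟨n + 1, ?_⟩
    rw [hCs n, hn]
    split_ifs
    · exact Or.inl Set.inter_subset_right
    · exact Or.inr (by rw [Set.diff_inter_self])
  have hInOut : ∀ i, (∃ m, C m ⊆ B0 i) → (∃ m, C m ∩ B0 i = ∅) → False := by
    rintro i ⟨m, hm⟩ ⟨m', hm'⟩
    obtain ⟨x, hx⟩ := hCne (max m m')
    have hx1 : x ∈ B0 i := hm (hCmono (le_max_left m m') hx)
    have hx2 : x ∈ C m' := hCmono (le_max_right m m') hx
    rw [Set.eq_empty_iff_forall_notMem] at hm'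
    exact hm' x ⟨hx2, hx1⟩
  have hOut : ∀ i, i < ν0 → ¬(∃ m, C m ⊆ B0 i) → ∃ m, C m ∩ B0 i = ∅ := by
    intro i hi hn
    rcases hdec i hi with ⟨m, hm | hm⟩
    · exact absurd ⟨m, hm⟩ hn
    · exact ⟨m, hm⟩
  obtain ⟨Xs, hXsdef⟩ : ∃ Xs : Set α, Xs = {x | ∀ m, x ∈ C m} := ⟨_, rfl⟩
  have hXsub : Xs.Subsingleton := by
    intro x hx x' hx'
    rw [hXsdef] at hx hx'
    by_contra hneq
    obtain ⟨i, hi, j, hj, hxi, hxj, hdisj⟩ :=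
      hax5 x (hCX0 0 (hx 0)) x' (hCX0 0 (hx' 0)) hneq
    rcases hdec i hi with ⟨m, hm | hm⟩
    · have : x' ∈ B0 i := hm (hx' m)
      rw [Set.eq_empty_iff_forall_notMem] at hdisj
      exact hdisj x' ⟨this, hxj⟩
    · rw [Set.eq_empty_iff_forall_notMem] at hm
      exact hm x ⟨hx m, hxi⟩
  have hXfin : Xs.Finite := hXsub.finite
  -- picking the new convergent set K2
  obtain ⟨kf, hkinj, hkmem⟩ : ∃ f : ℕ → α, Function.Injective f ∧
      ∀ j, f j ∈ (C j ∩ K') \ (Xs ∪ FU j) := by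
    apply exists_picker
    intro j
    have hfin : (Xs ∪ (FU j ∩ K')).Finite := hXfin.union (hFUK' j)
    refine ((hCK' j).diff hfin).mono ?_
    rintro x ⟨hx1, hx2⟩
    refine ⟨hx1, ?_⟩
    rintro (h | h)
    · exact hx2 (Or.inl h)
    · exact hx2 (Or.inr ⟨h, hx1.2⟩)
  have hkC : ∀ j, kf j ∈ C j := fun j => (hkmem j).1.1
  have hkK' : ∀ j, kf j ∈ K' := fun j => (hkmem j).1.2
  have hkXs : ∀ j, kf j ∉ Xs := fun j h => (hkmem j).2 (Or.inl h)
  have hkFU : ∀ j, kf j ∉ FU j := fun j h => (hkmem j).2 (Or.inr h)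
  obtain ⟨K2, hK2def⟩ : ∃ K2 : Set α, K2 = Set.range kf := ⟨_, rfl⟩
  have hkK2 : ∀ j, kf j ∈ K2 := fun j => by rw [hK2def]; exact ⟨j, rfl⟩
  have hK2K' : K2 ⊆ K' := by
    rw [hK2def]; rintro x ⟨j, rfl⟩; exact hkK' j
  have hK2K : K2 ⊆ K := hK2K'.trans hK'K
  have hK2inf : K2.Infinite := by
    rw [hK2def]; exact Set.infinite_range_of_injective hkinj
  have hK2Kp : ∀ n, (K2 ∩ Kp n).Finite := fun n => (hK'.2 n).subset
    (fun x hx => ⟨hK2K' hx.1, hx.2⟩)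
  have hK2F0 : ∀ y, y < γ0 → MemKK K Kp (F0 y) → (F0 y ∩ K2).Finite := by
    intro y hy hmem
    obtain ⟨t, ht⟩ := heγ y hy
    have hsub : F0 y ∩ K2 ⊆ kf '' (Set.Iio (t + 1)) := by
      rintro x ⟨hx1, hx2⟩
      rw [hK2def] at hx2
      obtain ⟨j, rfl⟩ := hx2
      by_cases hj : j < t + 1
      · exact ⟨j, hj, rfl⟩
      · exact absurd (hFUsup y hy hmem t ht j (by omega) hx1) (hkFU j)
    exact ((Set.finite_Iio _).image kf).subset hsub
  -- the crowded thin set Z0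
  obtain ⟨TZ, hTZdef⟩ : ∃ TZ : ℕ → Set α, ∀ r, TZ r =
      if dT r = 0 then (B0 (e (dA r)) ∩ Kp (N (e (dA r)) + dB r)) \ (Xs ∪ FU r)
      else if dT r = 1 then (B0 (e (dA r)) ∩ Lp (N (e (dA r)) + dB r)) \ Xs
      else if dT r = 2 then (B0 (e (dA r)) ∩ M) \ Xs
      else if dT r = 3 then (B0 (e (dA r)) ∩ Kp (N (e (dA r)) + dB r)) \ K'
      else if dT r = 4 then B0 (e (dA r)) ∩ Lp (N (e (dA r)) + dB r)
      else if dT r = 5 then B0 (e (dA r)) ∩ M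
      else if eγ (dA r) < γ0 then F0 (eγ (dA r)) else B0 (e 0) ∩ M := ⟨_, fun _ => rfl⟩
  have hKpInf : ∀ i, i < ν0 → ∀ b : ℕ, (B0 i ∩ Kp (N i + b)).Infinite :=
    fun i hi b => (hNsp i hi (N i + b) (by omega)).1
  have hLpInf : ∀ i, i < ν0 → ∀ b : ℕ, (B0 i ∩ Lp (N i + b)).Infinite :=
    fun i hi b => (hNsp i hi (N i + b) (by omega)).2
  have hTZinf : ∀ r, (TZ r).Infinite := by
    intro r
    rw [hTZdef]
    split_ifs with h0t h1t h2t h3t h4t h5t h6t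
    · refine ((hKpInf _ (he1 (dA r)) (dB r)).diff (hXfin.union (hFUKp r (N (e (dA r)) + dB r)))).mono ?_
      rintro x ⟨hx1, hx2⟩
      refine ⟨hx1, ?_⟩
      rintro (h | h)
      · exact hx2 (Or.inl h)
      · exact hx2 (Or.inr ⟨h, hx1.2⟩)
    · exact (hLpInf _ (he1 (dA r)) (dB r)).diff hXfin
    · exact (hBM _ (he1 (dA r))).diff hXfin
    · refine ((hKpInf _ (he1 (dA r)) (dB r)).diff (hK'.2 (N (e (dA r)) + dB r))).mono ?_
      rintro x ⟨hx1, hx2⟩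
      exact ⟨hx1, fun h => hx2 ⟨h, hx1.2⟩⟩
    · exact hLpInf _ (he1 (dA r)) (dB r)
    · exact hBM _ (he1 (dA r))
    · exact (hF0 _ h6t).1
    · exact hBM _ (he1 0)
  obtain ⟨zf, hzinj, hzmem⟩ := exists_picker TZ hTZinf
  obtain ⟨Z0, hZ0def⟩ : ∃ Z0 : Set α, Z0 = {x | ∃ r, dT r ≤ 2 ∧ zf r = x} := ⟨_, rfl⟩
  have hzZ0 : ∀ r, dT r ≤ 2 → zf r ∈ Z0 := by
    intro r h; rw [hZ0def]; exact ⟨r, h, rfl⟩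
  have hznZ0 : ∀ r, 3 ≤ dT r → zf r ∉ Z0 := by
    intro r h hmem
    rw [hZ0def] at hmem
    obtain ⟨r', hr', heq⟩ := hmem
    rw [hzinj heq] at hr'
    omega
  have hz0 : ∀ r, dT r = 0 →
      zf r ∈ (B0 (e (dA r)) ∩ Kp (N (e (dA r)) + dB r)) \ (Xs ∪ FU r) := by
    intro r h; have hm := hzmem r; rw [hTZdef] at hm; rwa [if_pos h] at hm
  have hz1 : ∀ r, dT r = 1 →
      zf r ∈ (B0 (e (dA r)) ∩ Lp (N (e (dA r)) + dB r)) \ Xs := by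
    intro r h; have hm := hzmem r; rw [hTZdef] at hm
    rwa [if_neg (by omega), if_pos h] at hm
  have hz2 : ∀ r, dT r = 2 → zf r ∈ (B0 (e (dA r)) ∩ M) \ Xs := by
    intro r h; have hm := hzmem r; rw [hTZdef] at hm
    rwa [if_neg (by omega), if_neg (by omega), if_pos h] at hm
  have hz3 : ∀ r, dT r = 3 →
      zf r ∈ (B0 (e (dA r)) ∩ Kp (N (e (dA r)) + dB r)) \ K' := by
    intro r h; have hm := hzmem r; rw [hTZdef] at hm
    rwa [if_neg (by omega), if_neg (by omega), if_neg (by omega), if_pos h] at hm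
  have hz4 : ∀ r, dT r = 4 →
      zf r ∈ B0 (e (dA r)) ∩ Lp (N (e (dA r)) + dB r) := by
    intro r h; have hm := hzmem r; rw [hTZdef] at hm
    rwa [if_neg (by omega), if_neg (by omega), if_neg (by omega), if_neg (by omega),
      if_pos h] at hm
  have hz5 : ∀ r, dT r = 5 → zf r ∈ B0 (e (dA r)) ∩ M := by
    intro r h; have hm := hzmem r; rw [hTZdef] at hm
    rwa [if_neg (by omega), if_neg (by omega), if_neg (by omega), if_neg (by omega),
      if_neg (by omega), if_pos h] at hm
  have hz6 : ∀ r, dT r = 6 → eγ (dA r) < γ0 → zf r ∈ F0 (eγ (dA r)) := by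
    intro r h hg; have hm := hzmem r; rw [hTZdef] at hm
    rwa [if_neg (by omega), if_neg (by omega), if_neg (by omega), if_neg (by omega),
      if_neg (by omega), if_neg (by omega), if_pos hg] at hm
  have hdTlt : ∀ r : ℕ, dT r ≤ 6 := by
    intro r
    have : dT r < 7 := Nat.mod_lt _ (by omega)
    omega
  have hZ0case : ∀ x ∈ Z0, ∃ r, zf r = x ∧ (dT r = 0 ∨ dT r = 1 ∨ dT r = 2) := by
    intro x hx
    rw [hZ0def] at hx
    obtain ⟨r, hr, heq⟩ := hx
    exact ⟨r, heq, by omega⟩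
  have hZ0X0 : Z0 ⊆ X0 := by
    intro x hx
    obtain ⟨r, rfl, h | h | h⟩ := hZ0case x hx
    · exact hax1 _ (he1 _) (hz0 r h).1.1
    · exact hax1 _ (he1 _) (hz1 r h).1.1
    · exact hax1 _ (he1 _) (hz2 r h).1.1
  have hZ0Xs : ∀ x ∈ Z0, x ∉ Xs := by
    intro x hx
    obtain ⟨r, rfl, h | h | h⟩ := hZ0case x hx
    · exact fun hs => (hz0 r h).2 (Or.inl hs)
    · exact (hz1 r h).2
    · exact (hz2 r h).2
  have hZ0KLM : Z0 ⊆ K ∪ L ∪ M := by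
    intro x hx
    obtain ⟨r, rfl, h | h | h⟩ := hZ0case x hx
    · exact Or.inl (Or.inl (hKpK _ (hz0 r h).1.2))
    · exact Or.inl (Or.inr (hLpL _ (hz1 r h).1.2))
    · exact Or.inr (hz2 r h).1.2
  -- crowdedness of Z0
  have hG1M : ∀ i, i < ν0 → (Z0 ∩ (B0 i ∩ M)).Infinite := by
    intro i hi
    obtain ⟨a, ha⟩ := he2 i hi
    apply Set.infinite_of_injective_forall_mem (f := fun c => zf (enc 2 a 0 c))
    case hi =>
      intro c c' hcc
      exact enc_inj_c (by omega) (hzinj hcc)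
    case hf =>
      intro c
      have ht : dT (enc 2 a 0 c) = 2 := dT_enc 2 a 0 c (by omega)
      have hm := (hz2 _ ht).1
      rw [dA_enc 2 a 0 c (by omega), ha] at hm
      exact ⟨hzZ0 _ (by omega), hm⟩
  have hG1Kp : ∀ i, i < ν0 → ∀ n, N i ≤ n → (Z0 ∩ (B0 i ∩ Kp n)).Infinite := by
    intro i hi n hn
    obtain ⟨a, ha⟩ := he2 i hi
    apply Set.infinite_of_injective_forall_mem (f := fun c => zf (enc 0 a (n - N i) c))
    case hi =>
      intro c c' hcc
      exact enc_inj_c (by omega) (hzinj hcc)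
    case hf =>
      intro c
      have ht : dT (enc 0 a (n - N i) c) = 0 := dT_enc _ a _ c (by omega)
      have hm := (hz0 _ ht).1
      rw [dA_enc _ a _ c (by omega), dB_enc _ a _ c (by omega), ha] at hm
      have hnn : N i + (n - N i) = n := by omega
      rw [hnn] at hm
      exact ⟨hzZ0 _ (by omega), hm⟩
  have hG1Lp : ∀ i, i < ν0 → ∀ n, N i ≤ n → (Z0 ∩ (B0 i ∩ Lp n)).Infinite := by
    intro i hi n hn
    obtain ⟨a, ha⟩ := he2 i hi
    apply Set.infinite_of_injective_forall_mem (f := fun c => zf (enc 1 a (n - N i) c))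
    case hi =>
      intro c c' hcc
      exact enc_inj_c (by omega) (hzinj hcc)
    case hf =>
      intro c
      have ht : dT (enc 1 a (n - N i) c) = 1 := dT_enc _ a _ c (by omega)
      have hm := (hz1 _ ht).1
      rw [dA_enc _ a _ c (by omega), dB_enc _ a _ c (by omega), ha] at hm
      have hnn : N i + (n - N i) = n := by omega
      rw [hnn] at hm
      exact ⟨hzZ0 _ (by omega), hm⟩
  -- thinness of Z0 ∪ K2
  have hG2M : ∀ i, i < ν0 → ((B0 i ∩ M) \ (Z0 ∪ K2)).Infinite := by
    intro i hi
    obtain ⟨a, ha⟩ := he2 i hi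
    apply Set.infinite_of_injective_forall_mem (f := fun c => zf (enc 5 a 0 c))
    case hi =>
      intro c c' hcc
      exact enc_inj_c (by omega) (hzinj hcc)
    case hf =>
      intro c
      have ht : dT (enc 5 a 0 c) = 5 := dT_enc _ a _ c (by omega)
      have hm := hz5 _ ht
      rw [dA_enc _ a _ c (by omega), ha] at hm
      refine ⟨hm, ?_⟩
      rintro (h | h)
      · exact hznZ0 _ (by omega) h
      · exact Set.disjoint_left.mp hKM (hK2K h) hm.2
  have hG2Kp : ∀ i, i < ν0 → ∀ n, N i ≤ n → ((B0 i ∩ Kp n) \ (Z0 ∪ K2)).Infinite := by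
    intro i hi n hn
    obtain ⟨a, ha⟩ := he2 i hi
    apply Set.infinite_of_injective_forall_mem (f := fun c => zf (enc 3 a (n - N i) c))
    case hi =>
      intro c c' hcc
      exact enc_inj_c (by omega) (hzinj hcc)
    case hf =>
      intro c
      have ht : dT (enc 3 a (n - N i) c) = 3 := dT_enc _ a _ c (by omega)
      have hm := hz3 _ ht
      rw [dA_enc _ a _ c (by omega), dB_enc _ a _ c (by omega), ha] at hm
      have hnn : N i + (n - N i) = n := by omega
      rw [hnn] at hm
      refine ⟨hm.1, ?_⟩
      rintro (h | h)
      · exact hznZ0 _ (by omega) h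
      · exact hm.2 (hK2K' h)
  have hG2Lp : ∀ i, i < ν0 → ∀ n, N i ≤ n → ((B0 i ∩ Lp n) \ (Z0 ∪ K2)).Infinite := by
    intro i hi n hn
    obtain ⟨a, ha⟩ := he2 i hi
    apply Set.infinite_of_injective_forall_mem (f := fun c => zf (enc 4 a (n - N i) c))
    case hi =>
      intro c c' hcc
      exact enc_inj_c (by omega) (hzinj hcc)
    case hf =>
      intro c
      have ht : dT (enc 4 a (n - N i) c) = 4 := dT_enc _ a _ c (by omega)
      have hm := hz4 _ ht
      rw [dA_enc _ a _ c (by omega), dB_enc _ a _ c (by omega), ha] at hm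
      have hnn : N i + (n - N i) = n := by omega
      rw [hnn] at hm
      refine ⟨hm, ?_⟩
      rintro (h | h)
      · exact hznZ0 _ (by omega) h
      · exact Set.disjoint_left.mp hKL (hK2K h) (hLpL _ hm.2)
  have hG2F : ∀ y, y < γ0 → (F0 y \ Z0).Infinite := by
    intro y hy
    obtain ⟨t, ht⟩ := heγ y hy
    apply Set.infinite_of_injective_forall_mem (f := fun c => zf (enc 6 t 0 c))
    case hi =>
      intro c c' hcc
      exact enc_inj_c (by omega) (hzinj hcc)
    case hf =>
      intro c
      have htt : dT (enc 6 t 0 c) = 6 := dT_enc _ t _ c (by omega)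
      have hda : dA (enc 6 t 0 c) = t := dA_enc _ t _ c (by omega)
      have hm := hz6 _ htt (by rw [hda, ht]; exact hy)
      rw [hda, ht] at hm
      exact ⟨hm, hznZ0 _ (by omega)⟩
  have hZ0F0 : ∀ y, y < γ0 → MemKK K Kp (F0 y) → (F0 y ∩ Z0).Finite := by
    intro y hy hmem
    obtain ⟨t, ht⟩ := heγ y hy
    have hsub : F0 y ∩ Z0 ⊆ zf '' (Set.Iio (t + 1)) := by
      rintro x ⟨hx1, hx2⟩
      obtain ⟨r, rfl, h | h | h⟩ := hZ0case x hx2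
      · by_cases hr : r < t + 1
        · exact ⟨r, hr, rfl⟩
        · exact absurd (hFUsup y hy hmem t ht r (by omega) hx1)
            (fun hh => (hz0 r h).2 (Or.inr hh))
      · exact absurd (hLpL _ (hz1 r h).1.2)
          (Set.disjoint_left.mp hKL (hmem.1 hx1))
      · exact absurd (hz2 r h).1.2 (Set.disjoint_left.mp hKM (hmem.1 hx1))
    exact ((Set.finite_Iio _).image zf).subset hsub
  -- the set Y and its trace on the chain
  obtain ⟨Y, hYdef⟩ : ∃ Y : Set α, Y = K2 ∪ Z0 := ⟨_, rfl⟩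
  have hYX0 : Y ⊆ X0 := by
    rw [hYdef]
    rintro x (hx | hx)
    · exact hKX0 (hK2K hx)
    · exact hZ0X0 hx
  have hYKLM : Y ⊆ K ∪ L ∪ M := by
    rw [hYdef]
    rintro x (hx | hx)
    · exact Or.inl (Or.inl (hK2K hx))
    · exact hZ0KLM hx
  have hYXs : ∀ x ∈ Y, x ∉ Xs := by
    rw [hYdef]
    rintro x (hx | hx)
    · rw [hK2def] at hx
      obtain ⟨j, rfl⟩ := hx
      exact hkXs j
    · exact hZ0Xs x hx
  have hpY : p ∉ Y := fun h => hpX0 (hYX0 h)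
  have hpC : ∀ m, p ∉ C m := fun m h => hpX0 (hCX0 m h)
  have hpB0 : ∀ i, i < ν0 → p ∉ B0 i := fun i hi h => hpX0 (hax1 i hi h)
  have hkY : ∀ j, kf j ∈ Y := fun j => by rw [hYdef]; exact Or.inl (hkK2 j)
  have hYnXs : ∀ x ∈ Y, ∃ m, x ∉ C m := by
    intro x hx
    have h1 : x ∉ Xs := hYXs x hx
    rw [hXsdef] at h1
    exact not_forall.mp h1
  -- the families of new basic sets
  obtain ⟨Pif, hPifdef⟩ : ∃ f : Ordinal → Set α, ∀ i, f i = {x | x = p ∧ ∃ m, C m ⊆ B0 i} :=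
    ⟨_, fun _ => rfl⟩
  obtain ⟨O, hOdef⟩ : ∃ f : Ordinal → Set α, ∀ i, f i = B0 i ∪ Pif i := ⟨_, fun _ => rfl⟩
  obtain ⟨V, hVdef⟩ : ∃ f : ℕ → Set α, ∀ m, f m = {p} ∪ (Y ∩ C m) := ⟨_, fun _ => rfl⟩
  obtain ⟨R, hRdef⟩ : ∃ f : Ordinal → Set α, ∀ i, f i = B0 i \ Y := ⟨_, fun _ => rfl⟩
  obtain ⟨SS, hSSdef⟩ : ∃ f : Ordinal → ℕ → ℕ → Set α, ∀ i a b,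
      f i a b = Y ∩ (C a \ C b) ∩ B0 i := ⟨_, fun _ _ _ => rfl⟩
  obtain ⟨SI, hSIdef⟩ : ∃ f : Ordinal → ℕ → Set α, ∀ i a,
      f i a = (Y ∩ C a ∩ B0 i) ∪ Pif i := ⟨_, fun _ _ => rfl⟩
  -- membership facts
  have hPifp : ∀ i x, x ∈ Pif i → x = p := by
    intro i x hx; rw [hPifdef] at hx; exact hx.1
  have hpPif : ∀ i, (∃ m, C m ⊆ B0 i) → p ∈ Pif i := by
    intro i h; rw [hPifdef]; exact ⟨rfl, h⟩
  have hPifX0 : ∀ i, Pif i ∩ X0 = ∅ := by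
    intro i
    rw [Set.eq_empty_iff_forall_notMem]
    rintro x ⟨hx1, hx2⟩
    rw [hPifp i x hx1] at hx2
    exact hpX0 hx2
  have hOX0 : ∀ i, i < ν0 → O i ∩ X0 = B0 i := by
    intro i hi
    rw [hOdef, Set.union_inter_distrib_right, hPifX0, Set.union_empty,
      Set.inter_eq_left.mpr (hax1 i hi)]
  have hOold : ∀ i, i < ν0 → ∀ x, x ≠ p → (x ∈ O i ↔ x ∈ B0 i) := by
    intro i hi x hxp
    rw [hOdef]
    constructor
    · rintro (h | h)
      · exact h
      · exact absurd (hPifp i x h) hxp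
    · exact fun h => Or.inl h
  have hpO : ∀ i, i < ν0 → (p ∈ O i ↔ ∃ m, C m ⊆ B0 i) := by
    intro i hi
    rw [hOdef]
    constructor
    · rintro (h | h)
      · exact absurd h (hpB0 i hi)
      · rw [hPifdef] at h; exact h.2
    · exact fun h => Or.inr (hpPif i h)
  have hOsubB : ∀ i, B0 i ⊆ O i := by
    intro i; rw [hOdef]; exact Set.subset_union_left
  have hpV : ∀ m, p ∈ V m := by intro m; rw [hVdef]; exact Or.inl rfl
  have hVold : ∀ m x, x ≠ p → (x ∈ V m ↔ x ∈ Y ∩ C m) := by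
    intro m x hxp
    rw [hVdef]
    constructor
    · rintro (h | h)
      · exact absurd h hxp
      · exact h
    · exact fun h => Or.inr h
  have hRX0 : ∀ i, i < ν0 → R i ⊆ X0 := by
    intro i hi; rw [hRdef]; exact Set.diff_subset.trans (hax1 i hi)
  have hpR : ∀ i, i < ν0 → p ∉ R i := fun i hi h => hpX0 (hRX0 i hi h)
  have hSSX0 : ∀ i a b, SS i a b ⊆ X0 := by
    intro i a b; rw [hSSdef]
    exact (Set.inter_subset_left.trans Set.inter_subset_left).trans hYX0
  have hpSS : ∀ i a b, p ∉ SS i a b := fun i a b h => hpX0 (hSSX0 i a b h)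
  have hSIold : ∀ i a x, x ≠ p → (x ∈ SI i a ↔ x ∈ Y ∩ C a ∩ B0 i) := by
    intro i a x hxp
    rw [hSIdef]
    constructor
    · rintro (h | h)
      · exact h
      · exact absurd (hPifp i x h) hxp
    · exact fun h => Or.inl h
  have hpSI : ∀ i, i < ν0 → ∀ a, (p ∈ SI i a ↔ ∃ m, C m ⊆ B0 i) := by
    intro i hi a
    rw [hSIdef]
    constructor
    · rintro (h | h)
      · exact absurd (hYX0 h.1.1) hpX0
      · rw [hPifdef] at h; exact h.2
    · exact fun h => Or.inr (hpPif i h)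
  -- the new indexed family
  obtain ⟨newSet, hnewdef⟩ : ∃ f : ℕ → Set α, ∀ n, f n =
      if dT n = 0 then V (dA n)
      else if dT n = 1 then R (e (dA n))
      else if dT n = 2 then
        (if (Y ∩ (C (dB n) \ C (dC n)) ∩ B0 (e (dA n))).Nonempty
          then SS (e (dA n)) (dB n) (dC n) else V 0)
      else if dT n = 3 then
        (if (Y ∩ C (dB n) ∩ B0 (e (dA n))).Nonempty then SI (e (dA n)) (dB n) else V 0)
      else V 0 := ⟨_, fun _ => rfl⟩
  obtain ⟨B1, hB1def⟩ : ∃ B1 : Ordinal → Set α, ∀ i, B1 i =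
      if i < ν0 then O i
      else (if h : ∃ n : ℕ, i = ν0 + (n : Ordinal) then newSet h.choose else V 0) :=
    ⟨_, fun _ => rfl⟩
  have hB1lt : ∀ i, i < ν0 → B1 i = O i := by
    intro i hi; rw [hB1def, if_pos hi]
  have hB1n : ∀ n : ℕ, B1 (ν0 + (n : Ordinal)) = newSet n := by
    intro n
    have hex : ∃ n' : ℕ, ν0 + (n : Ordinal) = ν0 + (n' : Ordinal) := ⟨n, rfl⟩
    rw [hB1def, if_neg (not_lt.mpr (le_self_add : ν0 ≤ ν0 + (n : Ordinal))), dif_pos hex]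
    have := hex.choose_spec
    rw [add_left_cancel_iff] at this
    exact congrArg newSet (Nat.cast_inj.mp this).symm
  have hν1n : ∀ n : ℕ, ν0 + (n : Ordinal) < ν0 + Ordinal.omega0 := by
    intro n
    exact (add_lt_add_iff_left ν0).mpr (Ordinal.nat_lt_omega0 n)
  have hlt1 : ∀ i, i < ν0 → i < ν0 + Ordinal.omega0 :=
    fun i h => lt_of_lt_of_le h (le_self_add : ν0 ≤ ν0 + Ordinal.omega0)
  obtain ⟨Form, hFormdef⟩ : ∃ P : Set α → Prop, ∀ T, P T ↔
      ((∃ i, i < ν0 ∧ T = O i) ∨ (∃ m, T = V m) ∨ (∃ i, i < ν0 ∧ T = R i) ∨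
       (∃ i, i < ν0 ∧ ∃ a b, (Y ∩ (C a \ C b) ∩ B0 i).Nonempty ∧ T = SS i a b) ∨
       (∃ i, i < ν0 ∧ ∃ a, (Y ∩ C a ∩ B0 i).Nonempty ∧ T = SI i a)) :=
    ⟨_, fun _ => Iff.rfl⟩
  have hFormB1 : ∀ i, i < ν0 + Ordinal.omega0 → Form (B1 i) := by
    intro i hi
    rw [hFormdef]
    rcases lt_or_ge i ν0 with h | h
    · exact Or.inl ⟨i, h, hB1lt i h⟩
    · obtain ⟨n, rfl⟩ := (ord_split hi).resolve_left (not_lt.mpr h)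
      rw [hB1n n, hnewdef]
      split_ifs with h0 h1 h2 hne2 h3 hne3
      · exact Or.inr (Or.inl ⟨dA n, rfl⟩)
      · exact Or.inr (Or.inr (Or.inl ⟨e (dA n), he1 _, rfl⟩))
      · exact Or.inr (Or.inr (Or.inr (Or.inl ⟨e (dA n), he1 _, dB n, dC n, hne2, rfl⟩)))
      · exact Or.inr (Or.inl ⟨0, rfl⟩)
      · exact Or.inr (Or.inr (Or.inr (Or.inr ⟨e (dA n), he1 _, dB n, hne3, rfl⟩)))
      · exact Or.inr (Or.inl ⟨0, rfl⟩)
      · exact Or.inr (Or.inl ⟨0, rfl⟩)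
  have hexO : ∀ i, i < ν0 → ∃ k, k < ν0 + Ordinal.omega0 ∧ B1 k = O i :=
    fun i h => ⟨i, hlt1 i h, hB1lt i h⟩
  have hexV : ∀ m, ∃ k, k < ν0 + Ordinal.omega0 ∧ B1 k = V m := by
    intro m
    refine ⟨ν0 + (enc 0 m 0 0 : ℕ), hν1n _, ?_⟩
    rw [hB1n, hnewdef, if_pos (dT_enc 0 m 0 0 (by omega)), dA_enc 0 m 0 0 (by omega)]
  have hexR : ∀ i, i < ν0 → ∃ k, k < ν0 + Ordinal.omega0 ∧ B1 k = R i := by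
    intro i hi
    obtain ⟨a, ha⟩ := he2 i hi
    refine ⟨ν0 + (enc 1 a 0 0 : ℕ), hν1n _, ?_⟩
    rw [hB1n, hnewdef, if_neg (by rw [dT_enc 1 a 0 0 (by omega)]; omega),
      if_pos (dT_enc 1 a 0 0 (by omega)), dA_enc 1 a 0 0 (by omega), ha]
  have hexSS : ∀ i, i < ν0 → ∀ a b, (Y ∩ (C a \ C b) ∩ B0 i).Nonempty →
      ∃ k, k < ν0 + Ordinal.omega0 ∧ B1 k = SS i a b := by
    intro i hi a b hne
    obtain ⟨a', ha'⟩ := he2 i hi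
    refine ⟨ν0 + (enc 2 a' a b : ℕ), hν1n _, ?_⟩
    rw [hB1n, hnewdef, if_neg (by rw [dT_enc 2 a' a b (by omega)]; omega),
      if_neg (by rw [dT_enc 2 a' a b (by omega)]; omega), if_pos (dT_enc 2 a' a b (by omega)),
      dA_enc 2 a' a b (by omega), dB_enc 2 a' a b (by omega), dC_enc 2 a' a b (by omega), ha',
      if_pos hne]
  have hexSI : ∀ i, i < ν0 → ∀ a, (Y ∩ C a ∩ B0 i).Nonempty →
      ∃ k, k < ν0 + Ordinal.omega0 ∧ B1 k = SI i a := by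
    intro i hi a hne
    obtain ⟨a', ha'⟩ := he2 i hi
    refine ⟨ν0 + (enc 3 a' a 0 : ℕ), hν1n _, ?_⟩
    rw [hB1n, hnewdef, if_neg (by rw [dT_enc 3 a' a 0 (by omega)]; omega),
      if_neg (by rw [dT_enc 3 a' a 0 (by omega)]; omega), if_neg (by rw [dT_enc 3 a' a 0 (by omega)]; omega),
      if_pos (dT_enc 3 a' a 0 (by omega)),
      dA_enc 3 a' a 0 (by omega), dB_enc 3 a' a 0 (by omega), ha', if_pos hne]
  have hexForm : ∀ T, Form T → ∃ k, k < ν0 + Ordinal.omega0 ∧ B1 k = T := by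
    intro T hT
    rw [hFormdef] at hT
    rcases hT with ⟨i, hi, rfl⟩ | ⟨m, rfl⟩ | ⟨i, hi, rfl⟩ | ⟨i, hi, a, b, hne, rfl⟩ |
      ⟨i, hi, a, hne, rfl⟩
    · exact hexO i hi
    · exact hexV m
    · exact hexR i hi
    · exact hexSS i hi a b hne
    · exact hexSI i hi a hne
  -- level function on Y
  have hdex : ∀ x, ∃ n : ℕ, x ∈ Y → (x ∉ C n ∧ ∀ m, m < n → x ∈ C m) := by
    intro x
    by_cases hx : x ∈ Y
    · have h : ∃ m, x ∉ C m := hYnXs x hx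
      exact ⟨Nat.find h, fun _ => ⟨Nat.find_spec h,
        fun m hm => by_contra (fun hc => Nat.find_min h hm hc)⟩⟩
    · exact ⟨0, fun h => absurd h hx⟩
  choose d hdspec' using hdex
  have hdspec : ∀ x ∈ Y, x ∉ C (d x) ∧ ∀ m, m < d x → x ∈ C m := fun x hx => hdspec' x hx
  have hdpos : ∀ x ∈ Y, 1 ≤ d x := by
    intro x hx
    by_contra hc
    have h0 : d x = 0 := by omega
    have := (hdspec x hx).1
    rw [h0, hC0] at this
    exact this (hYX0 hx)
  have hdmem : ∀ x ∈ Y, x ∈ C (d x - 1) := by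
    intro x hx
    exact (hdspec x hx).2 _ (by have := hdpos x hx; omega)
  have hdlt : ∀ x ∈ Y, ∀ m, x ∈ C m → m < d x := by
    intro x hx m hm
    by_contra hc
    exact (hdspec x hx).1 (hCmono (by omega) hm)
  have hInPC : ∀ k, (∃ m', C m' ⊆ B0 k) → ∀ m, (B0 k ∩ C m).Nonempty := by
    rintro k ⟨m', hm'⟩ m
    obtain ⟨x, hx⟩ := hCne (max m' m)
    exact ⟨x, hm' (hCmono (le_max_left _ _) hx), hCmono (le_max_right _ _) hx⟩
  have hOB0disj : ∀ i k, i < ν0 → k < ν0 → B0 k ∩ B0 i = ∅ → O k ∩ O i = ∅ := by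
    intro i k hi hk hdisj
    rw [Set.eq_empty_iff_forall_notMem]
    rintro z ⟨hz1, hz2⟩
    by_cases hzp : z = p
    · subst hzp
      obtain ⟨m1, hm1⟩ := (hpO k hk).mp hz1
      obtain ⟨m2, hm2⟩ := (hpO i hi).mp hz2
      obtain ⟨w, hw⟩ := hCne (max m1 m2)
      have : w ∈ B0 k ∩ B0 i :=
        ⟨hm1 (hCmono (le_max_left _ _) hw), hm2 (hCmono (le_max_right _ _) hw)⟩
      rw [hdisj] at this
      exact this
    · have h1 := (hOold k hk z hzp).mp hz1
      have h2 := (hOold i hi z hzp).mp hz2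
      have : z ∈ B0 k ∩ B0 i := ⟨h1, h2⟩
      rw [hdisj] at this
      exact this
  -- the canonical shrink witness at an old point
  obtain ⟨Wit, hWitdef⟩ : ∃ W : α → Ordinal → Set α, ∀ x k,
      W x k = if x ∈ Y then SS k (d x - 1) (d x) else R k := ⟨_, fun _ _ => rfl⟩
  have hWitMem : ∀ x ∈ X0, ∀ k, k < ν0 → x ∈ B0 k → Form (Wit x k) ∧ x ∈ Wit x k := by
    intro x hx k hk hxk
    rw [hWitdef]
    by_cases hxY : x ∈ Y
    · rw [if_pos hxY]
      have hxmem : x ∈ Y ∩ (C (d x - 1) \ C (d x)) ∩ B0 k :=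
        ⟨⟨hxY, hdmem x hxY, (hdspec x hxY).1⟩, hxk⟩
      constructor
      · rw [hFormdef]
        exact Or.inr (Or.inr (Or.inr (Or.inl ⟨k, hk, d x - 1, d x, ⟨x, hxmem⟩, rfl⟩)))
      · rw [hSSdef]; exact hxmem
    · rw [if_neg hxY]
      constructor
      · rw [hFormdef]
        exact Or.inr (Or.inr (Or.inl ⟨k, hk, rfl⟩))
      · rw [hRdef]; exact ⟨hxk, hxY⟩
  have hWitSub : ∀ T, Form T → ∀ x ∈ T, x ≠ p →
      ∃ i, i < ν0 ∧ x ∈ B0 i ∧ ∀ k, k < ν0 → B0 k ⊆ B0 i → Wit x k ⊆ T := by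
    intro T hT x hxT hxp
    rw [hFormdef] at hT
    rcases hT with ⟨i, hi, rfl⟩ | ⟨m, rfl⟩ | ⟨i, hi, rfl⟩ | ⟨i, hi, a, b, hne, rfl⟩ |
      ⟨i, hi, a, hne, rfl⟩
    · -- O i
      refine ⟨i, hi, (hOold i hi x hxp).mp hxT, fun k hk hsub => ?_⟩
      rw [hWitdef]
      split_ifs with hxY
      · rw [hSSdef]
        exact fun z hz => hOsubB i (hsub hz.2)
      · rw [hRdef]
        exact fun z hz => hOsubB i (hsub hz.1)
    · -- V m
      have hxm := (hVold m x hxp).mp hxT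
      obtain ⟨i, hi, hxi⟩ := hcover x (hYX0 hxm.1)
      refine ⟨i, hi, hxi, fun k hk hsub => ?_⟩
      rw [hWitdef, if_pos hxm.1, hSSdef, hVdef]
      rintro z ⟨⟨hzY, hz1, _⟩, _⟩
      exact Or.inr ⟨hzY, hCmono (by
        have := hdlt x hxm.1 m hxm.2
        omega) hz1⟩
    · -- R i
      rw [hRdef] at hxT
      refine ⟨i, hi, hxT.1, fun k hk hsub => ?_⟩
      rw [hWitdef, if_neg hxT.2, hRdef, hRdef]
      exact fun z hz => ⟨hsub hz.1, hz.2⟩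
    · -- SS i a b
      rw [hSSdef] at hxT
      have hxY := hxT.1.1
      refine ⟨i, hi, hxT.2, fun k hk hsub => ?_⟩
      rw [hWitdef, if_pos hxY, hSSdef, hSSdef]
      rintro z ⟨⟨hzY, hz1, hz2⟩, hzk⟩
      have hab : a < d x := hdlt x hxY a hxT.1.2.1
      have hbb : d x ≤ b := by
        by_contra hc
        exact hxT.1.2.2 ((hdspec x hxY).2 b (by omega))
      refine ⟨⟨hzY, hCmono (by omega) hz1, fun hzb => hz2 (hCmono hbb hzb)⟩, hsub hzk⟩
    · -- SI i a
      have hxm := (hSIold i a x hxp).mp hxT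
      refine ⟨i, hi, hxm.2, fun k hk hsub => ?_⟩
      rw [hWitdef, if_pos hxm.1.1, hSSdef, hSIdef]
      rintro z ⟨⟨hzY, hz1, _⟩, hzk⟩
      have hax : a < d x := hdlt x hxm.1.1 a hxm.1.2
      exact Or.inl ⟨⟨hzY, hCmono (by omega) hz1⟩, hsub hzk⟩
  -- p-tails
  have hKeyP : ∀ T, Form T → p ∈ T → ∃ m0, ∀ m, m0 ≤ m → V m ⊆ T := by
    intro T hT hpT
    rw [hFormdef] at hT
    rcases hT with ⟨i, hi, rfl⟩ | ⟨m, rfl⟩ | ⟨i, hi, rfl⟩ | ⟨i, hi, a, b, hne, rfl⟩ |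
      ⟨i, hi, a, hne, rfl⟩
    · obtain ⟨m, hm⟩ := (hpO i hi).mp hpT
      refine ⟨m, fun m' hm' => ?_⟩
      rw [hVdef]
      rintro z (hz | hz)
      · rw [hz]; exact (hpO i hi).mpr ⟨m, hm⟩
      · exact hOsubB i (hm (hCmono hm' hz.2))
    · refine ⟨m, fun m' hm' => ?_⟩
      rw [hVdef, hVdef]
      rintro z (hz | hz)
      · exact Or.inl hz
      · exact Or.inr ⟨hz.1, hCmono hm' hz.2⟩
    · exact absurd hpT (hpR i hi)
    · exact absurd hpT (hpSS i a b)
    · obtain ⟨m, hm⟩ := (hpSI i hi a).mp hpT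
      refine ⟨max a m, fun m' hm' => ?_⟩
      rw [hVdef, hSIdef]
      rintro z (hz | hz)
      · rw [hz]; exact Or.inr (hpPif i ⟨m, hm⟩)
      · exact Or.inl ⟨⟨hz.1, hCmono (le_trans (le_max_left a m) hm') hz.2⟩,
          hm (hCmono (le_trans (le_max_right a m) hm') hz.2)⟩
  -- the filtering property
  have hKey : ∀ T U, Form T → Form U → ∀ x ∈ T ∩ U,
      ∃ S, Form S ∧ x ∈ S ∧ S ⊆ T ∩ U := by
    intro T U hT hU x hx
    by_cases hxp : x = p
    · subst hxp
      obtain ⟨m1, hm1⟩ := hKeyP T hT hx.1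
      obtain ⟨m2, hm2⟩ := hKeyP U hU hx.2
      refine ⟨V (max m1 m2), ?_, hpV _, fun z hz =>
        ⟨hm1 _ (le_max_left _ _) hz, hm2 _ (le_max_right _ _) hz⟩⟩
      rw [hFormdef]
      exact Or.inr (Or.inl ⟨max m1 m2, rfl⟩)
    · obtain ⟨i, hi, hxi, hsubT⟩ := hWitSub T hT x hx.1 hxp
      obtain ⟨j, hj, hxj, hsubU⟩ := hWitSub U hU x hx.2 hxp
      obtain ⟨k, hk, hxk, hksub⟩ := hax3 i hi j hj x ⟨hxi, hxj⟩
      have hxX0 : x ∈ X0 := hax1 i hi hxi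
      obtain ⟨hform, hmem⟩ := hWitMem x hxX0 k hk hxk
      exact ⟨Wit x k, hform, hmem,
        fun z hz => ⟨hsubT k hk (fun w hw => (hksub hw).1) hz,
          hsubU k hk (fun w hw => (hksub hw).2) hz⟩⟩
  have hpOC : ∀ k m, k < ν0 → B0 k ⊆ X0 \ C m → p ∉ O k := by
    intro k m hk hsub hpOk
    obtain ⟨m', hm'⟩ := (hpO k hk).mp hpOk
    obtain ⟨w, hw1, hw2⟩ := hInPC k ⟨m', hm'⟩ m
    exact (hsub hw1).2 hw2
  -- separating witnesses for complements
  have hdisjWit : ∀ T, Form T → ∀ x, (x ∈ X0 ∨ x = p) → x ∉ T →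
      ∃ S, Form S ∧ x ∈ S ∧ S ∩ T = ∅ := by
    intro T hT x hxX hxT
    rw [hFormdef] at hT
    rcases hT with ⟨i, hi, rfl⟩ | ⟨m, rfl⟩ | ⟨i, hi, rfl⟩ | ⟨i, hi, a, b, hne, rfl⟩ |
      ⟨i, hi, a, hne, rfl⟩
    · -- T = O i
      rcases hxX with hxX | rfl
      · have hxB : x ∉ B0 i := fun h => hxT (hOsubB i h)
        obtain ⟨k, hk, hxk, hksub⟩ := (hax4 i hi).2 x ⟨hxX, hxB⟩
        refine ⟨O k, by rw [hFormdef]; exact Or.inl ⟨k, hk, rfl⟩, hOsubB k hxk, ?_⟩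
        rw [Set.eq_empty_iff_forall_notMem]
        rintro z ⟨hz1, hz2⟩
        by_cases hzp : z = p
        · subst hzp
          obtain ⟨m1, hm1⟩ := (hpO k hk).mp hz1
          obtain ⟨m2, hm2⟩ := (hpO i hi).mp hz2
          obtain ⟨w, hw⟩ := hCne (max m1 m2)
          exact (hksub (hm1 (hCmono (le_max_left _ _) hw))).2
            (hm2 (hCmono (le_max_right _ _) hw))
        · exact (hksub ((hOold k hk z hzp).mp hz1)).2 ((hOold i hi z hzp).mp hz2)
      · have hnIn : ¬∃ m, C m ⊆ B0 i := fun h => hxT ((hpO i hi).mpr h)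
        obtain ⟨m, hm⟩ := hOut i hi hnIn
        refine ⟨V m, by rw [hFormdef]; exact Or.inr (Or.inl ⟨m, rfl⟩), hpV m, ?_⟩
        rw [Set.eq_empty_iff_forall_notMem]
        rintro z ⟨hz1, hz2⟩
        by_cases hzp : z = p
        · subst hzp; exact hxT hz2
        · have hz1' := (hVold m z hzp).mp hz1
          have hz2' := (hOold i hi z hzp).mp hz2
          rw [Set.eq_empty_iff_forall_notMem] at hm
          exact hm z ⟨hz1'.2, hz2'⟩
    · -- T = V m
      rcases hxX with hxX | rfl
      · by_cases hxY : x ∈ Y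
        · have hxC : x ∉ C m := fun h => hxT (by rw [hVdef]; exact Or.inr ⟨hxY, h⟩)
          obtain ⟨k, hk, hxk, hksub⟩ := (hCcopen m).2 x ⟨hxX, hxC⟩
          refine ⟨O k, by rw [hFormdef]; exact Or.inl ⟨k, hk, rfl⟩, hOsubB k hxk, ?_⟩
          rw [Set.eq_empty_iff_forall_notMem]
          rintro z ⟨hz1, hz2⟩
          by_cases hzp : z = p
          · subst hzp; exact hpOC k m hk hksub hz1
          · exact (hksub ((hOold k hk z hzp).mp hz1)).2 ((hVold m z hzp).mp hz2).2
        · obtain ⟨k, hk, hxk⟩ := hcover x hxX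
          refine ⟨R k, by rw [hFormdef]; exact Or.inr (Or.inr (Or.inl ⟨k, hk, rfl⟩)),
            by rw [hRdef]; exact ⟨hxk, hxY⟩, ?_⟩
          rw [Set.eq_empty_iff_forall_notMem]
          rintro z ⟨hz1, hz2⟩
          rw [hRdef] at hz1
          have hzp : z ≠ p := fun h => hpX0 (hax1 k hk (h ▸ hz1.1))
          exact hz1.2 ((hVold m z hzp).mp hz2).1
      · exact absurd (hpV m) hxT
    · -- T = R i
      rcases hxX with hxX | rfl
      · by_cases hxB : x ∈ B0 i
        · have hxY : x ∈ Y := by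
            by_contra hxY
            exact hxT (by rw [hRdef]; exact ⟨hxB, hxY⟩)
          refine ⟨SI i 0, ?_, ?_, ?_⟩
          · rw [hFormdef]
            refine Or.inr (Or.inr (Or.inr (Or.inr ⟨i, hi, 0, ⟨x, ?_⟩, rfl⟩)))
            exact ⟨⟨hxY, by rw [hC0]; exact hxX⟩, hxB⟩
          · rw [hSIdef]
            exact Or.inl ⟨⟨hxY, by rw [hC0]; exact hxX⟩, hxB⟩
          · rw [Set.eq_empty_iff_forall_notMem]
            rintro z ⟨hz1, hz2⟩
            rw [hRdef] at hz2
            have hzp : z ≠ p := fun h => hpX0 (hax1 i hi (h ▸ hz2.1))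
            exact hz2.2 ((hSIold i 0 z hzp).mp hz1).1.1
        · obtain ⟨k, hk, hxk, hksub⟩ := (hax4 i hi).2 x ⟨hxX, hxB⟩
          refine ⟨O k, by rw [hFormdef]; exact Or.inl ⟨k, hk, rfl⟩, hOsubB k hxk, ?_⟩
          rw [Set.eq_empty_iff_forall_notMem]
          rintro z ⟨hz1, hz2⟩
          rw [hRdef] at hz2
          have hzp : z ≠ p := fun h => hpX0 (hax1 i hi (h ▸ hz2.1))
          exact (hksub ((hOold k hk z hzp).mp hz1)).2 hz2.1
      · refine ⟨V 0, by rw [hFormdef]; exact Or.inr (Or.inl ⟨0, rfl⟩), hpV 0, ?_⟩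
        rw [Set.eq_empty_iff_forall_notMem]
        rintro z ⟨hz1, hz2⟩
        rw [hRdef] at hz2
        have hzp : z ≠ p := fun h => hpX0 (hax1 i hi (h ▸ hz2.1))
        exact hz2.2 ((hVold 0 z hzp).mp hz1).1
    · -- T = SS i a b
      have hSSmem : ∀ z, z ∈ SS i a b → z ∈ Y ∧ z ∈ C a ∧ z ∉ C b ∧ z ∈ B0 i := by
        intro z hz
        rw [hSSdef] at hz
        exact ⟨hz.1.1, hz.1.2.1, hz.1.2.2, hz.2⟩
      rcases hxX with hxX | rfl
      · by_cases hxB : x ∈ B0 i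
        · by_cases hxY : x ∈ Y
          · by_cases hxCb : x ∈ C b
            · obtain ⟨k, hk, hxk⟩ := hcover x hxX
              refine ⟨SI k b, ?_, ?_, ?_⟩
              · rw [hFormdef]
                exact Or.inr (Or.inr (Or.inr (Or.inr ⟨k, hk, b, ⟨x, ⟨hxY, hxCb⟩, hxk⟩, rfl⟩)))
              · rw [hSIdef]; exact Or.inl ⟨⟨hxY, hxCb⟩, hxk⟩
              · rw [Set.eq_empty_iff_forall_notMem]
                rintro z ⟨hz1, hz2⟩
                have hzp : z ≠ p := fun h => hpSS i a b (h ▸ hz2)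
                exact (hSSmem z hz2).2.2.1 ((hSIold k b z hzp).mp hz1).1.2
            · have hxCa : x ∉ C a := by
                intro hxCa
                exact hxT (by rw [hSSdef]; exact ⟨⟨hxY, hxCa, hxCb⟩, hxB⟩)
              obtain ⟨k, hk, hxk, hksub⟩ := (hCcopen a).2 x ⟨hxX, hxCa⟩
              refine ⟨O k, by rw [hFormdef]; exact Or.inl ⟨k, hk, rfl⟩, hOsubB k hxk, ?_⟩
              rw [Set.eq_empty_iff_forall_notMem]
              rintro z ⟨hz1, hz2⟩
              by_cases hzp : z = p
              · subst hzp; exact hpSS i a b hz2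
              · exact (hksub ((hOold k hk z hzp).mp hz1)).2 (hSSmem z hz2).2.1
          · obtain ⟨k, hk, hxk⟩ := hcover x hxX
            refine ⟨R k, by rw [hFormdef]; exact Or.inr (Or.inr (Or.inl ⟨k, hk, rfl⟩)),
              by rw [hRdef]; exact ⟨hxk, hxY⟩, ?_⟩
            rw [Set.eq_empty_iff_forall_notMem]
            rintro z ⟨hz1, hz2⟩
            rw [hRdef] at hz1
            exact hz1.2 (hSSmem z hz2).1
        · obtain ⟨k, hk, hxk, hksub⟩ := (hax4 i hi).2 x ⟨hxX, hxB⟩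
          refine ⟨O k, by rw [hFormdef]; exact Or.inl ⟨k, hk, rfl⟩, hOsubB k hxk, ?_⟩
          rw [Set.eq_empty_iff_forall_notMem]
          rintro z ⟨hz1, hz2⟩
          by_cases hzp : z = p
          · subst hzp; exact hpSS i a b hz2
          · exact (hksub ((hOold k hk z hzp).mp hz1)).2 (hSSmem z hz2).2.2.2
      · refine ⟨V b, by rw [hFormdef]; exact Or.inr (Or.inl ⟨b, rfl⟩), hpV b, ?_⟩
        rw [Set.eq_empty_iff_forall_notMem]
        rintro z ⟨hz1, hz2⟩
        have hzp : z ≠ p := fun h => hpSS i a b (h ▸ hz2)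
        exact (hSSmem z hz2).2.2.1 ((hVold b z hzp).mp hz1).2
    · -- T = SI i a
      rcases hxX with hxX | rfl
      · by_cases hxB : x ∈ B0 i
        · by_cases hxY : x ∈ Y
          · have hxCa : x ∉ C a := by
              intro hxCa
              exact hxT (by rw [hSIdef]; exact Or.inl ⟨⟨hxY, hxCa⟩, hxB⟩)
            obtain ⟨k, hk, hxk, hksub⟩ := (hCcopen a).2 x ⟨hxX, hxCa⟩
            refine ⟨O k, by rw [hFormdef]; exact Or.inl ⟨k, hk, rfl⟩, hOsubB k hxk, ?_⟩
            rw [Set.eq_empty_iff_forall_notMem]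
            rintro z ⟨hz1, hz2⟩
            by_cases hzp : z = p
            · subst hzp
              obtain ⟨m1, hm1⟩ := (hpO k hk).mp hz1
              obtain ⟨w, hw1, hw2⟩ := hInPC k ⟨m1, hm1⟩ a
              exact (hksub hw1).2 hw2
            · exact (hksub ((hOold k hk z hzp).mp hz1)).2 ((hSIold i a z hzp).mp hz2).1.2
          · obtain ⟨k, hk, hxk⟩ := hcover x hxX
            refine ⟨R k, by rw [hFormdef]; exact Or.inr (Or.inr (Or.inl ⟨k, hk, rfl⟩)),
              by rw [hRdef]; exact ⟨hxk, hxY⟩, ?_⟩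
            rw [Set.eq_empty_iff_forall_notMem]
            rintro z ⟨hz1, hz2⟩
            rw [hRdef] at hz1
            have hzp : z ≠ p := fun h => hpX0 (hax1 k hk (h ▸ hz1.1))
            exact hz1.2 ((hSIold i a z hzp).mp hz2).1.1
        · obtain ⟨k, hk, hxk, hksub⟩ := (hax4 i hi).2 x ⟨hxX, hxB⟩
          refine ⟨O k, by rw [hFormdef]; exact Or.inl ⟨k, hk, rfl⟩, hOsubB k hxk, ?_⟩
          rw [Set.eq_empty_iff_forall_notMem]
          rintro z ⟨hz1, hz2⟩
          by_cases hzp : z = p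
          · subst hzp
            obtain ⟨m1, hm1⟩ := (hpO k hk).mp hz1
            obtain ⟨m2, hm2⟩ := (hpSI i hi a).mp hz2
            obtain ⟨w, hw⟩ := hCne (max m1 m2)
            exact (hksub (hm1 (hCmono (le_max_left _ _) hw))).2
              (hm2 (hCmono (le_max_right _ _) hw))
          · exact (hksub ((hOold k hk z hzp).mp hz1)).2 ((hSIold i a z hzp).mp hz2).2
      · have hnIn : ¬∃ m, C m ⊆ B0 i := fun h => hxT ((hpSI i hi a).mpr h)
        obtain ⟨m, hm⟩ := hOut i hi hnIn
        refine ⟨V m, by rw [hFormdef]; exact Or.inr (Or.inl ⟨m, rfl⟩), hpV m, ?_⟩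
        rw [Set.eq_empty_iff_forall_notMem]
        rintro z ⟨hz1, hz2⟩
        by_cases hzp : z = p
        · subst hzp; exact hxT hz2
        · rw [Set.eq_empty_iff_forall_notMem] at hm
          exact hm z ⟨((hVold m z hzp).mp hz1).2, ((hSIold i a z hzp).mp hz2).2⟩
  have hFormV : ∀ m, Form (V m) := by
    intro m; rw [hFormdef]; exact Or.inr (Or.inl ⟨m, rfl⟩)
  have hFormsub : ∀ T, Form T → T ⊆ X0 ∪ {p} := by
    intro T hT
    rw [hFormdef] at hT
    rcases hT with ⟨i, hi, rfl⟩ | ⟨m, rfl⟩ | ⟨i, hi, rfl⟩ | ⟨i, hi, a, b, hne, rfl⟩ |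
      ⟨i, hi, a, hne, rfl⟩
    · rw [hOdef]
      rintro z (hz | hz)
      · exact Or.inl (hax1 i hi hz)
      · exact Or.inr (hPifp i z hz)
    · rw [hVdef]
      rintro z (hz | hz)
      · exact Or.inr hz
      · exact Or.inl (hYX0 hz.1)
    · exact fun z hz => Or.inl (hRX0 i hi hz)
    · exact fun z hz => Or.inl (hSSX0 i a b hz)
    · rw [hSIdef]
      rintro z (hz | hz)
      · exact Or.inl (hYX0 hz.1.1)
      · exact Or.inr (hPifp i z hz)
  have hZ0inY : Z0 ⊆ Y := by rw [hYdef]; exact Set.subset_union_right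
  have hFormLarge : ∀ T, Form T → (T ∩ M).Infinite ∧
      ∃ Nb : ℕ, ∀ n ≥ Nb, (T ∩ Kp n).Infinite ∧ (T ∩ Lp n).Infinite := by
    intro T hT
    rw [hFormdef] at hT
    rcases hT with ⟨i, hi, rfl⟩ | ⟨m, rfl⟩ | ⟨i, hi, rfl⟩ | ⟨i, hi, a, b, hne, rfl⟩ |
      ⟨i, hi, a, hne, rfl⟩
    · refine ⟨(hBM i hi).mono (fun z hz => ⟨hOsubB i hz.1, hz.2⟩), N i, fun n hn => ?_⟩
      exact ⟨((hNsp i hi n hn).1).mono (fun z hz => ⟨hOsubB i hz.1, hz.2⟩),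
        ((hNsp i hi n hn).2).mono (fun z hz => ⟨hOsubB i hz.1, hz.2⟩)⟩
    · obtain ⟨x, hx⟩ := hCne m
      obtain ⟨k, hk, hxk, hksub⟩ := (hCopen m).2 x hx
      have hmem : ∀ z ∈ Z0, z ∈ B0 k → z ∈ V m := by
        intro z hz hzk
        rw [hVdef]
        exact Or.inr ⟨hZ0inY hz, hksub hzk⟩
      refine ⟨(hG1M k hk).mono (fun z hz => ⟨hmem z hz.1 hz.2.1, hz.2.2⟩), N k, fun n hn => ?_⟩
      exact ⟨(hG1Kp k hk n hn).mono (fun z hz => ⟨hmem z hz.1 hz.2.1, hz.2.2⟩),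
        (hG1Lp k hk n hn).mono (fun z hz => ⟨hmem z hz.1 hz.2.1, hz.2.2⟩)⟩
    · have hmem : ∀ z, z ∈ B0 i → z ∉ Z0 ∪ K2 → z ∈ R i := by
        intro z hz hzn
        rw [hRdef]
        refine ⟨hz, fun hzy => ?_⟩
        rw [hYdef] at hzy
        rcases hzy with h | h
        · exact hzn (Or.inr h)
        · exact hzn (Or.inl h)
      refine ⟨(hG2M i hi).mono (fun z hz => ⟨hmem z hz.1.1 hz.2, hz.1.2⟩), N i, fun n hn => ?_⟩
      exact ⟨(hG2Kp i hi n hn).mono (fun z hz => ⟨hmem z hz.1.1 hz.2, hz.1.2⟩),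
        (hG2Lp i hi n hn).mono (fun z hz => ⟨hmem z hz.1.1 hz.2, hz.1.2⟩)⟩
    · obtain ⟨x, hx⟩ := hne
      have hW : IsOpenIn X0 ν0 B0 ((C a \ C b) ∩ B0 i) :=
        isOpenIn_inter hdesc0 (isOpenIn_diff hdesc0 (hCopen a) (hCcopen b))
          (isOpenIn_basic hdesc0 hi)
      obtain ⟨k, hk, hxk, hksub⟩ := hW.2 x ⟨hx.1.2, hx.2⟩
      have hmem : ∀ z ∈ Z0, z ∈ B0 k → z ∈ SS i a b := by
        intro z hz hzk
        rw [hSSdef]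
        exact ⟨⟨hZ0inY hz, (hksub hzk).1⟩, (hksub hzk).2⟩
      refine ⟨(hG1M k hk).mono (fun z hz => ⟨hmem z hz.1 hz.2.1, hz.2.2⟩), N k, fun n hn => ?_⟩
      exact ⟨(hG1Kp k hk n hn).mono (fun z hz => ⟨hmem z hz.1 hz.2.1, hz.2.2⟩),
        (hG1Lp k hk n hn).mono (fun z hz => ⟨hmem z hz.1 hz.2.1, hz.2.2⟩)⟩
    · obtain ⟨x, hx⟩ := hne
      have hW : IsOpenIn X0 ν0 B0 (C a ∩ B0 i) :=
        isOpenIn_inter hdesc0 (hCopen a) (isOpenIn_basic hdesc0 hi)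
      obtain ⟨k, hk, hxk, hksub⟩ := hW.2 x ⟨hx.1.2, hx.2⟩
      have hmem : ∀ z ∈ Z0, z ∈ B0 k → z ∈ SI i a := by
        intro z hz hzk
        rw [hSIdef]
        exact Or.inl ⟨⟨hZ0inY hz, (hksub hzk).1⟩, (hksub hzk).2⟩
      refine ⟨(hG1M k hk).mono (fun z hz => ⟨hmem z hz.1 hz.2.1, hz.2.2⟩), N k, fun n hn => ?_⟩
      exact ⟨(hG1Kp k hk n hn).mono (fun z hz => ⟨hmem z hz.1 hz.2.1, hz.2.2⟩),
        (hG1Lp k hk n hn).mono (fun z hz => ⟨hmem z hz.1 hz.2.1, hz.2.2⟩)⟩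
  -- the new description
  have hdesc1 : IsDescription X1 (ν0 + Ordinal.omega0) B1 := by
    refine ⟨?_, ?_, ?_, ?_, ?_⟩
    · intro i hi
      rw [hX1eq]
      exact hFormsub _ (hFormB1 i hi)
    · apply Set.eq_of_subset_of_subset
      · intro x hx
        rw [Set.mem_iUnion₂] at hx
        obtain ⟨i, hi, hxB⟩ := hx
        rw [hX1eq]
        exact hFormsub _ (hFormB1 i hi) hxB
      · intro x hx
        rw [hX1eq] at hx
        rw [Set.mem_iUnion₂]
        rcases hx with hx | hx
        · obtain ⟨i, hi, hxi⟩ := hcover x hx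
          exact ⟨i, hlt1 i hi, by rw [hB1lt i hi]; exact hOsubB i hxi⟩
        · obtain ⟨k, hk, hBk⟩ := hexV 0
          rw [hx]
          exact ⟨k, hk, by rw [hBk]; exact hpV 0⟩
    · intro i hi j hj x hx
      obtain ⟨S, hS, hxS, hSsub⟩ := hKey _ _ (hFormB1 i hi) (hFormB1 j hj) x hx
      obtain ⟨k, hk, hBk⟩ := hexForm S hS
      exact ⟨k, hk, by rw [hBk]; exact hxS, by rw [hBk]; exact hSsub⟩
    · intro i hi
      refine ⟨Set.diff_subset, fun x hx => ?_⟩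
      have hxX : x ∈ X0 ∨ x = p := by
        have h1 := hx.1
        rw [hX1eq] at h1
        rcases h1 with h | h
        · exact Or.inl h
        · exact Or.inr h
      obtain ⟨S, hS, hxS, hSdisj⟩ := hdisjWit _ (hFormB1 i hi) x hxX hx.2
      obtain ⟨k, hk, hBk⟩ := hexForm S hS
      refine ⟨k, hk, by rw [hBk]; exact hxS, ?_⟩
      rw [hBk]
      intro z hz
      refine ⟨by rw [hX1eq]; exact hFormsub _ hS hz, fun hzB => ?_⟩
      rw [Set.eq_empty_iff_forall_notMem] at hSdisj
      exact hSdisj z ⟨hz, hzB⟩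
    · intro x hx y hy hne
      have hxX : x ∈ X0 ∨ x = p := by
        rw [hX1eq] at hx
        rcases hx with h | h
        · exact Or.inl h
        · exact Or.inr h
      have hyX : y ∈ X0 ∨ y = p := by
        rw [hX1eq] at hy
        rcases hy with h | h
        · exact Or.inl h
        · exact Or.inr h
      have hsepP : ∀ z, z ∈ X0 → ∃ i, i < ν0 + Ordinal.omega0 ∧ ∃ j,
          j < ν0 + Ordinal.omega0 ∧ z ∈ B1 i ∧ p ∈ B1 j ∧ B1 i ∩ B1 j = ∅ := by
        intro z hz
        have hzp : z ≠ p := fun h => hpX0 (h ▸ hz)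
        have hzV : ∃ m, z ∉ V m := by
          by_cases hzY : z ∈ Y
          · refine ⟨d z, fun hmem => ?_⟩
            exact (hdspec z hzY).1 ((hVold _ z hzp).mp hmem).2
          · exact ⟨0, fun hmem => hzY ((hVold _ z hzp).mp hmem).1⟩
        obtain ⟨m, hzVm⟩ := hzV
        obtain ⟨S, hS, hzS, hSdisj⟩ := hdisjWit (V m) (hFormV m) z (Or.inl hz) hzVm
        obtain ⟨k, hk, hBk⟩ := hexForm S hS
        obtain ⟨k', hk', hBk'⟩ := hexV m
        exact ⟨k, hk, k', hk', by rw [hBk]; exact hzS, by rw [hBk']; exact hpV m,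
          by rw [hBk, hBk']; exact hSdisj⟩
      rcases hxX with hx0 | rfl
      · rcases hyX with hy0 | rfl
        · obtain ⟨i, hi, j, hj, hxi, hyj, hdisj⟩ := hax5 x hx0 y hy0 hne
          exact ⟨i, hlt1 i hi, j, hlt1 j hj,
            by rw [hB1lt i hi]; exact hOsubB i hxi,
            by rw [hB1lt j hj]; exact hOsubB j hyj,
            by rw [hB1lt i hi, hB1lt j hj]; exact hOB0disj j i hj hi hdisj⟩
        · exact hsepP x hx0
      · rcases hyX with hy0 | rfl
        · obtain ⟨i, hi, j, hj, hyi, hpj, hdisj⟩ := hsepP y hy0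
          exact ⟨j, hj, i, hi, hpj, hyi, by rw [Set.inter_comm]; exact hdisj⟩
        · exact absurd rfl hne
  -- the new convergent sets
  obtain ⟨F1, hF1def⟩ : ∃ F1 : Ordinal → Set α, ∀ y, F1 y =
      if y = γ0 then K2 else (if MemKK K Kp (F0 y) then F0 y else F0 y \ Z0) :=
    ⟨_, fun _ => rfl⟩
  have hF1γ : F1 γ0 = K2 := by rw [hF1def, if_pos rfl]
  have hF1y : ∀ y, y < γ0 → F1 y = if MemKK K Kp (F0 y) then F0 y else F0 y \ Z0 := by
    intro y hy
    have hne : y ≠ γ0 := ne_of_lt hy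
    rw [hF1def, if_neg hne]
  have hF1sub : ∀ y, y < γ0 → F1 y ⊆ F0 y := by
    intro y hy
    rw [hF1y y hy]
    split_ifs
    · exact subset_rfl
    · exact Set.diff_subset
  have hF1YFin : ∀ y, y < γ0 → (F1 y ∩ Y).Finite := by
    intro y hy
    rw [hF1y y hy, hYdef]
    split_ifs with hmem
    · refine ((hK2F0 y hy hmem).union (hZ0F0 y hy hmem)).subset ?_
      rintro z ⟨hz1, hz2 | hz2⟩
      · exact Or.inl ⟨hz1, hz2⟩
      · exact Or.inr ⟨hz1, hz2⟩
    · have hLM : F0 y ⊆ L ∪ M := by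
        rcases ((hF0 y hy).2.1.resolve_left hmem) with h | h
        · exact fun z hz => Or.inl (h.1 hz)
        · exact fun z hz => Or.inr (h hz)
      refine Set.Finite.subset Set.finite_empty ?_
      rintro z ⟨⟨hz1, hz2⟩, hz3 | hz3⟩
      · rcases hLM hz1 with h | h
        · exact Set.disjoint_left.mp hKL (hK2K hz3) h
        · exact Set.disjoint_left.mp hKM (hK2K hz3) h
      · exact hz2 hz3
  have hF1inf : ∀ y, y < γ0 → (F1 y).Infinite := by
    intro y hy
    rw [hF1y y hy]
    split_ifs
    · exact (hF0 y hy).1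
    · exact hG2F y hy
  have hF1type : ∀ y, y < γ0 →
      MemKK K Kp (F1 y) ∨ MemLL L Lp (F1 y) ∨ F1 y ⊆ M := by
    intro y hy
    rw [hF1y y hy]
    split_ifs with hmem
    · exact Or.inl hmem
    · rcases (hF0 y hy).2.1.resolve_left hmem with h | h
      · exact Or.inr (Or.inl ⟨Set.diff_subset.trans h.1,
          fun n => (h.2 n).subset (fun z hz => ⟨hz.1.1, hz.2⟩)⟩)
      · exact Or.inr (Or.inr (Set.diff_subset.trans h))
  have hpne : ∀ y, y < γ0 → emb y ≠ p := by
    intro y hy h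
    have := hembInj y γ0 (lt_trans hy hγ0) hγ0 h
    exact absurd this (ne_of_lt hy)
  have heyY : ∀ y, y < γ0 → emb y ∉ Y :=
    fun y hy h => hembNotKLM y hy (hYKLM h)
  have hconv1 : ∀ y, y < γ0 → ConvIn X1 (ν0 + Ordinal.omega0) B1 (F1 y) (emb y) := by
    intro y hy U hU hyU
    obtain ⟨k, hk, hyk, hksub⟩ := hU.2 _ hyU
    have hform := hFormB1 k hk
    rw [hFormdef] at hform
    have hstep : (F1 y \ U).Finite := by
      rcases hform with ⟨i, hi, hBk⟩ | ⟨m, hBk⟩ | ⟨i, hi, hBk⟩ | ⟨i, hi, a, b, hne2, hBk⟩ |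
        ⟨i, hi, a, hne2, hBk⟩
      · rw [hBk] at hyk hksub
        have hyB : emb y ∈ B0 i := (hOold i hi _ (hpne y hy)).mp hyk
        have hfin := (hF0 y hy).2.2 (B0 i) (isOpenIn_basic hdesc0 hi) hyB
        refine hfin.subset ?_
        rintro z ⟨hz1, hz2⟩
        refine ⟨hF1sub y hy hz1, fun hzB => hz2 (hksub (hOsubB i hzB))⟩
      · rw [hBk] at hyk
        rcases ((hVold m _ (hpne y hy)).mp hyk) with ⟨h1, _⟩
        exact absurd h1 (heyY y hy)
      · rw [hBk] at hyk hksub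
        rw [hRdef] at hyk
        have hfin := (hF0 y hy).2.2 (B0 i) (isOpenIn_basic hdesc0 hi) hyk.1
        refine (hfin.union (hF1YFin y hy)).subset ?_
        rintro z ⟨hz1, hz2⟩
        by_cases hzB : z ∈ B0 i
        · by_cases hzY : z ∈ Y
          · exact Or.inr ⟨hz1, hzY⟩
          · exact absurd (hksub (by rw [hRdef]; exact ⟨hzB, hzY⟩)) hz2
        · exact Or.inl ⟨hF1sub y hy hz1, hzB⟩
      · rw [hBk, hSSdef] at hyk
        exact absurd hyk.1.1 (heyY y hy)
      · rw [hBk] at hyk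
        rcases (hSIold i a _ (hpne y hy)).mp hyk with ⟨⟨h1, _⟩, _⟩
        exact absurd h1 (heyY y hy)
    exact hstep
  have hkftail : ∀ (m : ℕ) (S : Set α), (∀ j, m ≤ j → kf j ∈ S) → (K2 \ S).Finite := by
    intro m S hS
    refine ((Set.finite_Iio m).image kf).subset ?_
    rintro x ⟨hx1, hx2⟩
    rw [hK2def] at hx1
    obtain ⟨j, rfl⟩ := hx1
    by_cases hj : j < m
    · exact ⟨j, hj, rfl⟩
    · exact absurd (hS j (by omega)) hx2
  have hconvP : ConvIn X1 (ν0 + Ordinal.omega0) B1 K2 p := by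
    intro U hU hpU
    obtain ⟨k, hk, hpk, hksub⟩ := hU.2 _ hpU
    have hform := hFormB1 k hk
    rw [hFormdef] at hform
    rcases hform with ⟨i, hi, hBk⟩ | ⟨m, hBk⟩ | ⟨i, hi, hBk⟩ | ⟨i, hi, a, b, hne2, hBk⟩ |
      ⟨i, hi, a, hne2, hBk⟩
    · rw [hBk] at hpk hksub
      obtain ⟨m, hm⟩ := (hpO i hi).mp hpk
      refine (hkftail m U ?_).subset (fun z hz => hz)
      intro j hj
      exact hksub (hOsubB i (hm (hCmono hj (hkC j))))
    · rw [hBk] at hksub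
      refine (hkftail m U ?_).subset (fun z hz => hz)
      intro j hj
      refine hksub (by rw [hVdef]; exact Or.inr ⟨hkY j, hCmono hj (hkC j)⟩)
    · rw [hBk] at hpk
      exact absurd hpk (hpR i hi)
    · rw [hBk] at hpk
      exact absurd hpk (hpSS i a b)
    · rw [hBk] at hpk hksub
      obtain ⟨m, hm⟩ := (hpSI i hi a).mp hpk
      refine (hkftail (max a m) U ?_).subset (fun z hz => hz)
      intro j hj
      refine hksub (by
        rw [hSIdef]
        exact Or.inl ⟨⟨hkY j, hCmono (le_trans (le_max_left a m) hj) (hkC j)⟩,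
          hm (hCmono (le_trans (le_max_right a m) hj) (hkC j))⟩)
  have hγsucc : γ0 < γ0 + 1 := by
    rw [Ordinal.add_one_eq_succ]
    exact Order.lt_succ γ0
  have hOmono : ∀ i j, B0 i ⊆ B0 j → O i ⊆ O j := by
    intro i j hsub
    rw [hOdef, hOdef]
    rintro z (hz | hz)
    · exact Or.inl (hsub hz)
    · rw [hPifdef] at hz ⊢
      exact Or.inr ⟨hz.1, hz.2.imp (fun m hm => hm.trans hsub)⟩
  -- final assembly
  refine ⟨γ0 + 1, ν0 + Ordinal.omega0, B1, F1,
    ⟨add_one_lt_omega1 hγ0, add_omega_lt_omega1 hν0, ?_, ?_, ?_, ?_⟩,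
    ⟨le_of_lt hγsucc, ⟨?_, le_self_add, ?_, ?_, ?_⟩, ?_⟩,
    γ0, hγsucc, ?_⟩
  · rw [← hX1def, hX1eq]
    exact hX0c.union (Set.countable_singleton p)
  · rw [← hX1def]
    exact hdesc1
  · intro y hy
    have hy' : y ≤ γ0 := by
      rw [Ordinal.add_one_eq_succ] at hy
      exact Order.lt_succ_iff.mp hy
    rcases lt_or_eq_of_le hy' with hy0 | rfl
    · exact ⟨hF1inf y hy0, hF1type y hy0, by rw [← hX1def]; exact hconv1 y hy0⟩
    · refine ⟨by rw [hF1γ]; exact hK2inf, Or.inl (by rw [hF1γ]; exact ⟨hK2K, hK2Kp⟩), ?_⟩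
      rw [← hX1def, hF1γ, ← hpdef]
      exact hconvP
  · intro i hi
    exact hFormLarge _ (hFormB1 i hi)
  · rw [← hX0def, ← hX1def, hX1eq]
    exact Set.subset_union_left
  · intro i hi
    rw [← hX0def, hB1lt i hi]
    exact hOX0 i hi
  · intro i hi j hj
    rw [hB1lt i hi, hB1lt j hj]
    constructor
    · exact hOmono i j
    · intro h z hz
      have h1 : z ∈ O j ∩ X0 := ⟨h (hOsubB i hz), hax1 i hi hz⟩
      rw [hOX0 j hj] at h1
      exact h1
  · intro i hi j hj
    rw [hB1lt i hi, hB1lt j hj]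
    constructor
    · exact fun h => hOB0disj j i hj hi h
    · intro h
      rw [Set.eq_empty_iff_forall_notMem] at h ⊢
      intro z hz
      exact h z ⟨hOsubB i hz.1, hOsubB j hz.2⟩
  · intro y hy
    constructor
    · intro hmem
      rw [hF1y y hy, if_pos hmem]
    · intro _
      have : F1 y \ F0 y = ∅ := Set.diff_eq_empty.mpr (hF1sub y hy)
      rw [this]
      exact Set.finite_empty
  · rw [hF1γ, Set.inter_eq_left.mpr hK2K']
    exact hK2inf
end
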